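/- arXiv:1102.2767 — 10 statements merged into one kernel-verified Lean document; each statement's English description precedes it below -/
import Mathlib

section
/- For every real σ and every real t ≠ 0, |1 + 2^(σ+it) + 3^(σ+it)| < 1 + 2^σ + 3^σ, where powers are complex powers m^s = exp(s·log m). -/
lemma aux_strict {z : ℂ} (hz : z.re < ‖z‖) :
    ‖1 + z‖ < 1 + ‖z‖ := by
  have h0 : (0:ℝ) ≤ 1 + ‖z‖ := by positivity
  refine lt_of_pow_lt_pow_left₀ 2 h0 ?_
  rw [Complex.sq_norm, Complex.normSq_add]
  have h1 : Complex.normSq 1 = 1 := by simp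
  have h2 : Complex.normSq z = (‖z‖)^2 := (Complex.sq_norm z).symm
  rw [h1, h2]
  have h3 : ((1:ℂ) * (starRingEnd ℂ) z).re = z.re := by simp
  rw [h3]
  nlinarith [hz]

lemma aux_pow (a b : ℕ) (ha : 0 < a)
    (h : (a:ℝ) * Real.log 3 = (b:ℝ) * Real.log 2) : False := by
  rw [← Real.log_pow, ← Real.log_pow] at h
  have h3 : (0:ℝ) < (3:ℝ)^a := by positivity
  have h2 : (0:ℝ) < (2:ℝ)^b := by positivity
  have := Real.log_injOn_pos.eq_iff (Set.mem_Ioi.mpr h3) (Set.mem_Ioi.mpr h2) |>.mp h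
  have h3a : (3:ℕ)^a = 2^b := by exact_mod_cast this
  have hb : 0 < b := by
    rcases Nat.eq_zero_or_pos b with rfl | hb
    · have h1 : 1 < (3:ℕ)^a := Nat.one_lt_pow ha.ne' (by norm_num)
      simp at h3a
      omega
    · exact hb
  have hdvd : 2 ∣ (3:ℕ)^a := h3a ▸ dvd_pow_self 2 hb.ne'
  have := Nat.Prime.dvd_of_dvd_pow Nat.prime_two hdvd
  omega

lemma aux_cos (t : ℝ) (ht : t ≠ 0) :
    ¬ (Real.cos (t * Real.log 2) = 1 ∧ Real.cos (t * Real.log 3) = 1) := by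
  rintro ⟨h2, h3⟩
  rw [Real.cos_eq_one_iff] at h2 h3
  obtain ⟨k, hk⟩ := h2
  obtain ⟨n, hn⟩ := h3
  have hl2 : (0:ℝ) < Real.log 2 := Real.log_pos (by norm_num)
  have hl3 : (0:ℝ) < Real.log 3 := Real.log_pos (by norm_num)
  have hπ : (0:ℝ) < Real.pi := Real.pi_pos
  have hk0 : (k:ℝ) ≠ 0 := by
    intro h
    rw [h, zero_mul] at hk
    rcases mul_eq_zero.mp hk.symm with h' | h'
    · exact ht h'
    · exact hl2.ne' h'
  -- k * log 3 = n * log 2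
  have key : (k : ℝ) * Real.log 3 = (n : ℝ) * Real.log 2 := by
    have h2π : (0:ℝ) < 2 * Real.pi := by positivity
    nlinarith [hk, hn, mul_pos hl2 hl3]
  have keyabs : |(k:ℝ)| * Real.log 3 = |(n:ℝ)| * Real.log 2 := by
    have := congrArg abs key
    rwa [abs_mul, abs_mul, abs_of_pos hl3, abs_of_pos hl2] at this
  have hknat : |(k:ℝ)| = (k.natAbs : ℝ) := by
    rw [Nat.cast_natAbs]; push_cast; rfl
  have hnnat : |(n:ℝ)| = (n.natAbs : ℝ) := by
    rw [Nat.cast_natAbs]; push_cast; rfl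
  rw [hknat, hnnat] at keyabs
  refine aux_pow k.natAbs n.natAbs ?_ keyabs
  have : k ≠ 0 := by exact_mod_cast hk0
  omega

open Complex in
theorem stmt_2 (σ t : ℝ) (ht : t ≠ 0) :
    ‖1 + (2 : ℂ) ^ ((σ : ℂ) + t * I) + (3 : ℂ) ^ ((σ : ℂ) + t * I)‖
      < 1 + (2 : ℝ) ^ σ + (3 : ℝ) ^ σ := by
  set s : ℂ := (σ : ℂ) + t * I with hs
  have hre : s.re = σ := by simp [hs]
  have him : s.im = t := by simp [hs]
  -- expressions for the powers
  have h2 : (2 : ℂ) ^ s = Complex.exp (s * Real.log 2) := by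
    rw [Complex.cpow_def_of_ne_zero (by norm_num)]
    congr 1
    rw [mul_comm]
    congr 1
    rw [show (2:ℂ) = ((2:ℝ):ℂ) by norm_num,
      ← Complex.ofReal_log (by norm_num : (0:ℝ) ≤ 2)]
  have h3 : (3 : ℂ) ^ s = Complex.exp (s * Real.log 3) := by
    rw [Complex.cpow_def_of_ne_zero (by norm_num)]
    congr 1
    rw [mul_comm]
    congr 1
    rw [show (3:ℂ) = ((3:ℝ):ℂ) by norm_num,
      ← Complex.ofReal_log (by norm_num : (0:ℝ) ≤ 3)]
  have habs2 : ‖(2:ℂ) ^ s‖ = (2:ℝ) ^ σ := by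
    rw [h2, Complex.norm_exp, Real.rpow_def_of_pos (by norm_num : (0:ℝ) < 2)]
    congr 1
    simp only [Complex.mul_re, Complex.ofReal_re, Complex.ofReal_im, hre, mul_zero, sub_zero]
    ring
  have habs3 : ‖(3:ℂ) ^ s‖ = (3:ℝ) ^ σ := by
    rw [h3, Complex.norm_exp, Real.rpow_def_of_pos (by norm_num : (0:ℝ) < 3)]
    congr 1
    simp only [Complex.mul_re, Complex.ofReal_re, Complex.ofReal_im, hre, mul_zero, sub_zero]
    ring
  have hre2 : ((2:ℂ) ^ s).re = Real.exp (σ * Real.log 2) * Real.cos (t * Real.log 2) := by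
    rw [h2, Complex.exp_re]
    simp only [Complex.mul_re, Complex.mul_im, Complex.ofReal_re, Complex.ofReal_im,
      hre, him, mul_zero, zero_mul, sub_zero, add_zero, zero_add]
  have hre3 : ((3:ℂ) ^ s).re = Real.exp (σ * Real.log 3) * Real.cos (t * Real.log 3) := by
    rw [h3, Complex.exp_re]
    simp only [Complex.mul_re, Complex.mul_im, Complex.ofReal_re, Complex.ofReal_im,
      hre, him, mul_zero, zero_mul, sub_zero, add_zero, zero_add]
  have hcos := aux_cos t ht
  have hexp2 : Real.exp (σ * Real.log 2) = (2:ℝ) ^ σ := by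
    rw [Real.rpow_def_of_pos (by norm_num : (0:ℝ) < 2), mul_comm]
  have hexp3 : Real.exp (σ * Real.log 3) = (3:ℝ) ^ σ := by
    rw [Real.rpow_def_of_pos (by norm_num : (0:ℝ) < 3), mul_comm]
  by_cases hc2 : Real.cos (t * Real.log 2) = 1
  · have hc3 : Real.cos (t * Real.log 3) < 1 := by
      rcases lt_or_eq_of_le (Real.cos_le_one (t * Real.log 3)) with h | h
      · exact h
      · exact absurd ⟨hc2, h⟩ hcos
    have hstrict : ((3:ℂ)^s).re < ‖(3:ℂ)^s‖ := by
      rw [hre3, habs3, ← hexp3]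
      have := Real.exp_pos (σ * Real.log 3)
      nlinarith
    calc ‖1 + (2:ℂ)^s + (3:ℂ)^s‖
        ≤ ‖(2:ℂ)^s‖ + ‖1 + (3:ℂ)^s‖ := by
          have := norm_add_le ((2:ℂ)^s) (1 + (3:ℂ)^s)
          calc ‖1 + (2:ℂ)^s + (3:ℂ)^s‖
              = ‖(2:ℂ)^s + (1 + (3:ℂ)^s)‖ := by ring_nf
            _ ≤ _ := this
      _ < ‖(2:ℂ)^s‖ + (1 + ‖(3:ℂ)^s‖) := by
          have := aux_strict hstrict
          linarith
      _ = 1 + (2:ℝ)^σ + (3:ℝ)^σ := by rw [habs2, habs3]; ring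
  · have hc2' : Real.cos (t * Real.log 2) < 1 :=
      lt_of_le_of_ne (Real.cos_le_one _) hc2
    have hstrict : ((2:ℂ)^s).re < ‖(2:ℂ)^s‖ := by
      rw [hre2, habs2, ← hexp2]
      have := Real.exp_pos (σ * Real.log 2)
      nlinarith
    calc ‖1 + (2:ℂ)^s + (3:ℂ)^s‖
        ≤ ‖1 + (2:ℂ)^s‖ + ‖(3:ℂ)^s‖ :=
          norm_add_le _ _
      _ < (1 + ‖(2:ℂ)^s‖) + ‖(3:ℂ)^s‖ := by
          have := aux_strict hstrict
          linarith
      _ = 1 + (2:ℝ)^σ + (3:ℝ)^σ := by rw [habs2, habs3]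
end

section
/- For n > 2 and real σ, if s = σ + it with t ≠ 0, then |G_n(s)| < G_n(σ); i.e., the maximum of |G_n| on the half-plane Re s ≤ σ is attained only at the real point s = σ. -/
open Complex Real

lemma cpow_decomp (m : ℕ) (hm : 1 ≤ m) (σ t : ℝ) :
    (m:ℂ) ^ ((σ:ℂ) + t * I)
      = ((m:ℝ) ^ σ : ℝ) * Complex.exp ((t * Real.log m : ℝ) * I) := by
  have hm0 : (m:ℂ) ≠ 0 := Nat.cast_ne_zero.mpr (by omega)
  have hmR : (0:ℝ) < (m:ℝ) := by exact_mod_cast hm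
  rw [Complex.cpow_def_of_ne_zero hm0]
  have hlog : Complex.log (m:ℂ) = (Real.log m : ℂ) := by
    rw [← Complex.ofReal_natCast, Complex.ofReal_log hmR.le]
  rw [hlog]
  rw [show ((Real.log m : ℂ)) * ((σ:ℂ) + t * I)
      = ((σ * Real.log m : ℝ) : ℂ) + ((t * Real.log m : ℝ) : ℂ) * I by push_cast; ring]
  rw [Complex.exp_add]
  congr 1
  rw [← Complex.ofReal_exp]
  norm_cast
  rw [Real.rpow_def_of_pos hmR, mul_comm]

lemma sameRay_exp_one (m : ℕ) (hm : 1 ≤ m) (σ t : ℝ)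
    (h : SameRay ℝ (1:ℂ) ((m:ℂ) ^ ((σ:ℂ) + t * I))) :
    ∃ k : ℤ, t * Real.log m = 2 * π * k := by
  have hmR : (0:ℝ) < (m:ℝ) := by exact_mod_cast hm
  have hpow : (0:ℝ) < (m:ℝ) ^ σ := Real.rpow_pos_of_pos hmR σ
  set z := (m:ℂ) ^ ((σ:ℂ) + t * I) with hz
  have hdec := cpow_decomp m hm σ t
  have hzne : z ≠ 0 := by
    rw [hz, hdec]
    exact mul_ne_zero (by exact_mod_cast hpow.ne') (Complex.exp_ne_zero _)
  obtain ⟨r₁, r₂, hr₁, hr₂, hr⟩ := h.exists_pos one_ne_zero hzne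
  have hzr : z = ((r₁ / r₂ : ℝ) : ℂ) := by
    have : (r₁ : ℂ) = (r₂ : ℂ) * z := by
      simpa [Complex.real_smul] using hr
    have hr2 : (r₂:ℂ) ≠ 0 := Complex.ofReal_ne_zero.mpr hr₂.ne'
    rw [Complex.ofReal_div, eq_div_iff hr2]
    linear_combination -this
  -- exp (θ I) = positive real / m^σ, abs 1, hence = 1
  set θ : ℝ := t * Real.log m with hθ
  have hexp : Complex.exp ((θ:ℂ) * I) = (((r₁ / r₂) / (m:ℝ) ^ σ : ℝ) : ℂ) := by
    have h1 : (((m:ℝ)^σ : ℝ) : ℂ) * Complex.exp ((θ:ℂ) * I) = ((r₁/r₂ : ℝ):ℂ) := by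
      rw [← hdec, ← hz, hzr]
    have hms : (((m:ℝ)^σ : ℝ):ℂ) ≠ 0 := Complex.ofReal_ne_zero.mpr hpow.ne'
    rw [Complex.ofReal_div, eq_div_iff hms]
    linear_combination h1
  have habs : ‖Complex.exp ((θ:ℂ) * I)‖ = 1 := Complex.norm_exp_ofReal_mul_I θ
  have hcpos : (0:ℝ) < (r₁ / r₂) / (m:ℝ)^σ := by positivity
  have hc1 : ((r₁ / r₂) / (m:ℝ)^σ : ℝ) = 1 := by
    rw [hexp] at habs
    rw [Complex.norm_real, Real.norm_eq_abs, abs_of_pos hcpos] at habs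
    exact habs
  have : Complex.exp ((θ:ℂ) * I) = 1 := by rw [hexp, hc1]; norm_num
  rw [Complex.exp_eq_one_iff] at this
  obtain ⟨k, hk⟩ := this
  refine ⟨k, ?_⟩
  have : ((θ:ℂ)) = (k : ℂ) * (2 * π) := by
    have hI : (I:ℂ) ≠ 0 := Complex.I_ne_zero
    apply mul_right_cancel₀ hI
    rw [hk]; ring
  have : θ = k * (2 * π) := by exact_mod_cast this
  rw [this]; ring

open Complex Real

lemma core_nt (t : ℝ) (ht : t ≠ 0) (k j : ℤ)
    (h2 : t * Real.log 2 = 2 * π * k) (h3 : t * Real.log 3 = 2 * π * j) : False := by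
  have l2 : (0:ℝ) < Real.log 2 := Real.log_pos (by norm_num)
  have l3 : (0:ℝ) < Real.log 3 := Real.log_pos (by norm_num)
  have hk : (k:ℝ) ≠ 0 := by
    intro h0
    rw [h0, mul_zero] at h2
    exact (mul_ne_zero ht l2.ne') h2
  -- k * log 3 = j * log 2
  have key : (k:ℝ) * Real.log 3 = (j:ℝ) * Real.log 2 := by
    have := Real.pi_pos
    have e1 : t * Real.log 2 * Real.log 3 = 2 * π * k * Real.log 3 := by rw [h2]
    have e2 : t * Real.log 3 * Real.log 2 = 2 * π * j * Real.log 2 := by rw [h3]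
    nlinarith [e1, e2]
  have keyabs : (|k|:ℝ) * Real.log 3 = (|j|:ℝ) * Real.log 2 := by
    calc (|k|:ℝ) * Real.log 3 = |(k:ℝ) * Real.log 3| := by
          rw [abs_mul, abs_of_pos l3]
      _ = |(j:ℝ) * Real.log 2| := by rw [key]
      _ = (|j|:ℝ) * Real.log 2 := by
          rw [abs_mul, abs_of_pos l2]
  set a : ℕ := k.natAbs with ha
  set b : ℕ := j.natAbs with hb
  have ha1 : 1 ≤ a := by
    rcases Nat.eq_zero_or_pos a with h | h
    · exfalso; apply hk; exact_mod_cast congrArg (Int.cast : ℤ → ℝ) (Int.natAbs_eq_zero.mp h)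
    · exact h
  have keyn : (a:ℝ) * Real.log 3 = (b:ℝ) * Real.log 2 := by
    rw [ha, hb]
    push_cast [Nat.cast_natAbs]
    exact_mod_cast keyabs
  have hexp : (3:ℝ)^a = (2:ℝ)^b := by
    have e1 : Real.exp ((a:ℝ) * Real.log 3) = (3:ℝ)^a := by
      rw [Real.exp_nat_mul, Real.exp_log (by norm_num)]
    have e2 : Real.exp ((b:ℝ) * Real.log 2) = (2:ℝ)^b := by
      rw [Real.exp_nat_mul, Real.exp_log (by norm_num)]
    rw [← e1, ← e2, keyn]
  have hnat : (3:ℕ)^a = (2:ℕ)^b := by exact_mod_cast hexp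
  have hb1 : 1 ≤ b := by
    by_contra h
    interval_cases b
    · have : (3:ℕ)^a = 1 := by simpa using hnat
      have := Nat.pow_le_pow_right (by norm_num : 1 ≤ 3) ha1
      omega
  have : (2:ℕ) ∣ 3^a := hnat ▸ dvd_pow_self 2 (by omega)
  have := (Nat.prime_two.dvd_of_dvd_pow this)
  omega

lemma abs_cpow_nat (m : ℕ) (hm : 1 ≤ m) (σ t : ℝ) :
    ‖(m:ℂ) ^ ((σ:ℂ) + t * I)‖ = (m:ℝ) ^ σ := by
  have hmR : (0:ℝ) < (m:ℝ) := by exact_mod_cast hm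
  rw [show ((m:ℂ)) = (((m:ℝ)):ℂ) by push_cast; ring]
  rw [Complex.norm_cpow_eq_rpow_re_of_pos hmR]
  simp

open Complex in
theorem stmt_4 (n : ℕ) (hn : 2 < n) (σ t : ℝ) (ht : t ≠ 0) :
    ‖∑ m ∈ Finset.Icc 1 n, (m : ℂ) ^ ((σ : ℂ) + t * I)‖
      < ∑ m ∈ Finset.Icc 1 n, (m : ℝ) ^ σ := by
  have key : ∃ m0 : ℕ, m0 ∈ Finset.Icc 1 n ∧ m0 ≠ 1 ∧
      ¬ SameRay ℝ (1:ℂ) ((m0:ℂ) ^ ((σ:ℂ) + t * I)) := by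
    by_contra h
    simp only [not_exists, not_and, not_not] at h
    have h2 := h 2 (Finset.mem_Icc.mpr ⟨by norm_num, by omega⟩) (by norm_num)
    have h3 := h 3 (Finset.mem_Icc.mpr ⟨by norm_num, by omega⟩) (by norm_num)
    obtain ⟨k, hk⟩ := sameRay_exp_one 2 (by norm_num) σ t h2
    obtain ⟨j, hj⟩ := sameRay_exp_one 3 (by norm_num) σ t h3
    exact core_nt t ht k j (by exact_mod_cast hk) (by exact_mod_cast hj)
  obtain ⟨m0, hm0mem, hm0ne, hray⟩ := key
  have hm0ge : 1 ≤ m0 := (Finset.mem_Icc.mp hm0mem).1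
  set A := Finset.Icc 1 n with hA
  set B : Finset ℕ := {1, m0} with hB
  have hBA : B ⊆ A := by
    intro x hx
    rw [hB, Finset.mem_insert, Finset.mem_singleton] at hx
    rcases hx with rfl | rfl
    · exact Finset.mem_Icc.mpr ⟨le_refl 1, by omega⟩
    · exact hm0mem
  set f : ℕ → ℂ := fun m => (m:ℂ) ^ ((σ:ℂ) + t * I) with hf
  set g : ℕ → ℝ := fun m => (m:ℝ) ^ σ with hg
  have habsf : ∀ m ∈ A, ‖f m‖ = g m := fun m hm =>
    abs_cpow_nat m (Finset.mem_Icc.mp hm).1 σ t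
  have hf1 : f 1 = 1 := by simp [hf]
  have hsumB : ∑ m ∈ B, f m = 1 + f m0 := by
    rw [hB, Finset.sum_pair (Ne.symm hm0ne), hf1]
  have hsumBg : ∑ m ∈ B, g m = 1 + g m0 := by
    rw [hB, Finset.sum_pair (Ne.symm hm0ne)]
    simp [hg]
  have hstrict : ‖∑ m ∈ B, f m‖ < ∑ m ∈ B, g m := by
    rw [hsumB, hsumBg]
    have h1 := norm_add_lt_of_not_sameRay hray
    calc ‖1 + f m0‖ = ‖(1:ℂ) + f m0‖ := rfl
      _ < ‖(1:ℂ)‖ + ‖f m0‖ := h1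
      _ = 1 + g m0 := by
          rw [norm_one]
          congr 1
          exact habsf m0 hm0mem
  calc ‖∑ m ∈ A, f m‖
      = ‖(∑ m ∈ A \ B, f m) + ∑ m ∈ B, f m‖ := by
        rw [Finset.sum_sdiff hBA]
    _ ≤ ‖∑ m ∈ A \ B, f m‖ + ‖∑ m ∈ B, f m‖ :=
        norm_add_le _ _
    _ ≤ (∑ m ∈ A \ B, ‖f m‖) + ‖∑ m ∈ B, f m‖ := by
        gcongr
        exact norm_sum_le _ f
    _ = (∑ m ∈ A \ B, g m) + ‖∑ m ∈ B, f m‖ := by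
        congr 1
        exact Finset.sum_congr rfl fun m hm => habsf m (Finset.sdiff_subset hm)
    _ < (∑ m ∈ A \ B, g m) + ∑ m ∈ B, g m := by linarith
    _ = ∑ m ∈ A, g m := Finset.sum_sdiff hBA
end

section
/- Define x_{n,1} := sup{σ ∈ ℝ : 1 + 2^σ + ... + (n-1)^σ ≥ n^σ} for n > 2. If w = a + ib is a zero of G_n(s) = 1 + 2^s + ... + n^s, then a ≤ x_{n,1}. -/
theorem stmt_7 (n : ℕ) (hn : 2 < n) (w : ℂ)
    (hw : (∑ m ∈ Finset.Icc 1 n, (m : ℂ) ^ w) = 0) :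
    w.re ≤ sSup {σ : ℝ | (n : ℝ) ^ σ ≤ ∑ m ∈ Finset.Icc 1 (n - 1), (m : ℝ) ^ σ} := by
  set S : Set ℝ := {σ : ℝ | (n : ℝ) ^ σ ≤ ∑ m ∈ Finset.Icc 1 (n - 1), (m : ℝ) ^ σ} with hS
  have hn1 : (1:ℝ) ≤ ((n - 1 : ℕ) : ℝ) := by
    have : 2 ≤ n - 1 := by omega
    exact_mod_cast Nat.one_le_iff_ne_zero.mpr (by omega)
  have hnpos : (0:ℝ) < (n:ℝ) := by positivity
  -- membership
  have hmem : w.re ∈ S := by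
    have hsplit : (∑ m ∈ Finset.Icc 1 n, (m : ℂ) ^ w)
        = (∑ m ∈ Finset.Icc 1 (n-1), (m : ℂ) ^ w) + (n : ℂ) ^ w := by
      have h1 : n - 1 + 1 = n := by omega
      rw [← h1, Finset.sum_Icc_succ_top (by omega)]
      rw [h1]
    have hkey : (n : ℂ) ^ w = -(∑ m ∈ Finset.Icc 1 (n-1), (m : ℂ) ^ w) := by
      rw [hsplit] at hw; linear_combination hw
    have habs : (n:ℝ) ^ w.re = ‖∑ m ∈ Finset.Icc 1 (n-1), (m : ℂ) ^ w‖ := by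
      rw [← Complex.norm_cpow_eq_rpow_re_of_pos hnpos w]
      rw [show (((n:ℝ):ℂ)) = (n:ℂ) by push_cast; ring, hkey, norm_neg]
    simp only [hS, Set.mem_setOf_eq]
    rw [habs]
    calc ‖∑ m ∈ Finset.Icc 1 (n-1), (m : ℂ) ^ w‖
        ≤ ∑ m ∈ Finset.Icc 1 (n-1), ‖(m : ℂ) ^ w‖ := by
          exact norm_sum_le _ _
      _ ≤ ∑ m ∈ Finset.Icc 1 (n-1), (m : ℝ) ^ w.re := by
          apply Finset.sum_le_sum
          intro m hm
          have hm1 : 1 ≤ m := (Finset.mem_Icc.mp hm).1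
          have : (0:ℝ) < (m:ℝ) := by exact_mod_cast hm1
          rw [show ((m:ℂ)) = (((m:ℝ)):ℂ) by push_cast; ring,
            Complex.norm_cpow_eq_rpow_re_of_pos this]
  -- bounded above
  have hbdd : BddAbove S := by
    have hln : Real.log ((n-1:ℕ):ℝ) < Real.log n := by
      apply Real.log_lt_log (by linarith)
      have : n - 1 < n := by omega
      exact_mod_cast this
    have hd : 0 < Real.log n - Real.log ((n-1:ℕ):ℝ) := by linarith
    have hl1 : 0 ≤ Real.log ((n-1:ℕ):ℝ) := Real.log_nonneg hn1
    refine ⟨Real.log ((n-1:ℕ):ℝ) / (Real.log n - Real.log ((n-1:ℕ):ℝ)), ?_⟩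
    intro σ hσ
    rcases le_or_gt σ 0 with h0 | h0
    · exact h0.trans (by positivity)
    · simp only [hS, Set.mem_setOf_eq] at hσ
      have hsum : (∑ m ∈ Finset.Icc 1 (n - 1), (m : ℝ) ^ σ)
          ≤ ((n-1:ℕ):ℝ) * ((n-1:ℕ):ℝ) ^ σ := by
        calc (∑ m ∈ Finset.Icc 1 (n - 1), (m : ℝ) ^ σ)
            ≤ ∑ m ∈ Finset.Icc 1 (n - 1), ((n-1:ℕ):ℝ) ^ σ := by
              apply Finset.sum_le_sum
              intro m hm
              have hm2 : m ≤ n - 1 := (Finset.mem_Icc.mp hm).2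
              exact Real.rpow_le_rpow (by positivity) (by exact_mod_cast hm2) h0.le
          _ = ((n-1:ℕ):ℝ) * ((n-1:ℕ):ℝ) ^ σ := by
              rw [Finset.sum_const, Nat.card_Icc]
              simp [nsmul_eq_mul]
      have hle : (n:ℝ) ^ σ ≤ ((n-1:ℕ):ℝ) * ((n-1:ℕ):ℝ) ^ σ := hσ.trans hsum
      have hlog := Real.log_le_log (by positivity) hle
      rw [Real.log_rpow hnpos, Real.log_mul (by linarith) (by positivity),
        Real.log_rpow (by linarith)] at hlog
      rw [le_div_iff₀ hd]
      nlinarith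
  exact le_csSup hbdd hmem
end

section
/- For every integer n > 2, every real σ with x_{n,0} ≤ σ ≤ x_{n,1}, and every j with 1 ≤ j ≤ n, the inequality j^σ ≤ ∑_{k=1, k≠j}^{n} k^σ holds. -/
open Finset Filter Real

private lemma cont_base_rpow {c : ℝ} (hc : 0 < c) : Continuous (fun x : ℝ => c ^ x) := by
  have h : (fun x : ℝ => c ^ x) = fun x => Real.exp (Real.log c * x) := by
    ext x; rw [Real.rpow_def_of_pos hc]
  rw [h]
  exact Real.continuous_exp.comp (continuous_const.mul continuous_id)

private lemma tendsto_base_rpow_atBot {c : ℝ} (hc : 1 < c) :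
    Tendsto (fun x : ℝ => c ^ x) atBot (nhds 0) := by
  have h : (fun x : ℝ => c ^ x) = fun x => Real.exp (Real.log c * x) := by
    ext x; rw [Real.rpow_def_of_pos (by linarith)]
  rw [h]
  exact Real.tendsto_exp_atBot.comp (Tendsto.const_mul_atBot (Real.log_pos hc) tendsto_id)

private lemma tendsto_base_rpow_atTop {c : ℝ} (hc0 : 0 < c) (hc : c < 1) :
    Tendsto (fun x : ℝ => c ^ x) atTop (nhds 0) := by
  have h : (fun x : ℝ => c ^ x) = fun x => Real.exp (Real.log c * x) := by
    ext x; rw [Real.rpow_def_of_pos hc0]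
  rw [h]
  exact Real.tendsto_exp_atBot.comp
    (Tendsto.const_mul_atTop_of_neg (Real.log_neg hc0 hc) tendsto_id)

private lemma factA (n : ℕ) (hn : 2 < n) (σ : ℝ)
    (h₀ : sInf {x : ℝ | 1 ≤ ∑ m ∈ Finset.Icc 2 n, (m : ℝ) ^ x} ≤ σ) :
    1 ≤ ∑ m ∈ Finset.Icc 2 n, (m : ℝ) ^ σ := by
  set f : ℝ → ℝ := fun x => ∑ m ∈ Finset.Icc 2 n, (m : ℝ) ^ x with hf
  set S : Set ℝ := {x : ℝ | 1 ≤ f x} with hS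
  have hmono : Monotone f := by
    intro a b hab
    refine Finset.sum_le_sum fun m hm => ?_
    have h2 : 2 ≤ m := (Finset.mem_Icc.mp hm).1
    exact Real.rpow_le_rpow_of_exponent_le (by exact_mod_cast le_trans one_le_two h2) hab
  have hcont : Continuous f :=
    continuous_finset_sum _ fun m hm => cont_base_rpow
      (by have := (Finset.mem_Icc.mp hm).1; positivity)
  have hclosed : IsClosed S := isClosed_le continuous_const hcont
  have hne : S.Nonempty := by
    refine ⟨0, ?_⟩
    have : f 0 = (n - 1 : ℕ) := by
      simp [hf, Real.rpow_zero, Nat.card_Icc]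
    simp only [hS, Set.mem_setOf_eq, this]
    exact_mod_cast by omega
  have htend : Tendsto f atBot (nhds 0) := by
    have := tendsto_finset_sum (Finset.Icc 2 n)
      (fun m (hm : m ∈ Finset.Icc 2 n) => tendsto_base_rpow_atBot
        (c := (m : ℝ)) (by have := (Finset.mem_Icc.mp hm).1; exact_mod_cast by omega))
    simpa using this
  have hbdd : BddBelow S := by
    obtain ⟨a, ha⟩ := eventually_atBot.mp (htend.eventually_lt_const zero_lt_one)
    refine ⟨a, fun x hx => ?_⟩
    by_contra hc
    exact absurd hx (by simp only [hS, Set.mem_setOf_eq]; push_neg; exact ha x (by linarith [not_le.mp hc]))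
  have hmem : sInf S ∈ S := hclosed.csInf_mem hne hbdd
  exact le_trans hmem (hmono h₀)

private lemma factB (n : ℕ) (hn : 2 < n) (σ : ℝ)
    (h₁ : σ ≤ sSup {x : ℝ | (n : ℝ) ^ x ≤ ∑ m ∈ Finset.Icc 1 (n - 1), (m : ℝ) ^ x}) :
    (n : ℝ) ^ σ ≤ ∑ m ∈ Finset.Icc 1 (n - 1), (m : ℝ) ^ σ := by
  have hn0 : (0:ℝ) < n := by positivity
  set h : ℝ → ℝ := fun x => ∑ m ∈ Finset.Icc 1 (n - 1), ((m : ℝ) / n) ^ x with hh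
  have hTeq : ∀ x : ℝ, ((n : ℝ) ^ x ≤ ∑ m ∈ Finset.Icc 1 (n - 1), (m : ℝ) ^ x) ↔ 1 ≤ h x := by
    intro x
    have hpos : (0:ℝ) < (n : ℝ) ^ x := Real.rpow_pos_of_pos hn0 x
    have hsum : h x = (∑ m ∈ Finset.Icc 1 (n - 1), (m : ℝ) ^ x) / (n : ℝ) ^ x := by
      rw [hh, Finset.sum_div]
      exact Finset.sum_congr rfl fun m _ => Real.div_rpow (by positivity) (le_of_lt hn0) x
    rw [hsum, le_div_iff₀ hpos, one_mul]
  set T : Set ℝ := {x : ℝ | (n : ℝ) ^ x ≤ ∑ m ∈ Finset.Icc 1 (n - 1), (m : ℝ) ^ x} with hT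
  have hTeq' : T = {x : ℝ | 1 ≤ h x} := Set.ext fun x => hTeq x
  have hanti : Antitone h := by
    intro a b hab
    refine Finset.sum_le_sum fun m hm => ?_
    obtain ⟨hm1, hm2⟩ := Finset.mem_Icc.mp hm
    have h1 : (0:ℝ) < (m : ℝ) / n := by
      have : (0:ℝ) < m := by exact_mod_cast hm1; 
      positivity
    have h2 : (m : ℝ) / n ≤ 1 := by
      rw [div_le_one hn0]; exact_mod_cast by omega
    exact Real.rpow_le_rpow_of_exponent_ge h1 h2 hab
  have hcont : Continuous h :=
    continuous_finset_sum _ fun m hm => cont_base_rpow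
      (by
        have := (Finset.mem_Icc.mp hm).1
        have : (0:ℝ) < m := by exact_mod_cast this
        positivity)
  have hclosed : IsClosed T := by
    rw [hTeq']; exact isClosed_le continuous_const hcont
  have hne : T.Nonempty := by
    refine ⟨0, ?_⟩
    rw [hT, Set.mem_setOf_eq, Real.rpow_zero]
    have : ∑ m ∈ Finset.Icc 1 (n - 1), (m : ℝ) ^ (0:ℝ) = (n - 1 : ℕ) := by
      simp [Real.rpow_zero, Nat.card_Icc]
    rw [this]
    exact_mod_cast by omega
  have htend : Tendsto h atTop (nhds 0) := by
    have := tendsto_finset_sum (Finset.Icc 1 (n-1))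
      (fun m (hm : m ∈ Finset.Icc 1 (n-1)) => by
        obtain ⟨hm1, hm2⟩ := Finset.mem_Icc.mp hm
        refine tendsto_base_rpow_atTop (c := (m : ℝ) / n) ?_ ?_
        · have : (0:ℝ) < m := by exact_mod_cast hm1
          positivity
        · rw [div_lt_one hn0]; exact_mod_cast by omega)
    simpa [hh] using this
  have hbdd : BddAbove T := by
    obtain ⟨a, ha⟩ := eventually_atTop.mp (htend.eventually_lt_const zero_lt_one)
    refine ⟨a, fun x hx => ?_⟩
    by_contra hc
    rw [hTeq'] at hx
    exact absurd hx (by simp only [Set.mem_setOf_eq]; push_neg; exact ha x (by linarith [not_le.mp hc]))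
  have hmem : sSup T ∈ T := hclosed.csSup_mem hne hbdd
  rw [hTeq'] at hmem
  exact (hTeq σ).mpr (le_trans hmem (hanti (hTeq' ▸ h₁)))

theorem stmt_10 (n : ℕ) (hn : 2 < n) (σ : ℝ)
    (h₀ : sInf {x : ℝ | 1 ≤ ∑ m ∈ Finset.Icc 2 n, (m : ℝ) ^ x} ≤ σ)
    (h₁ : σ ≤ sSup {x : ℝ | (n : ℝ) ^ x ≤ ∑ m ∈ Finset.Icc 1 (n - 1), (m : ℝ) ^ x})
    (j : ℕ) (hj1 : 1 ≤ j) (hjn : j ≤ n) :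
    (j : ℝ) ^ σ ≤ ∑ k ∈ (Finset.Icc 1 n).erase j, (k : ℝ) ^ σ := by
  have hA := factA n hn σ h₀
  have hB := factB n hn σ h₁
  have hnonneg : ∀ k ∈ (Finset.Icc 1 n).erase j, (0:ℝ) ≤ (k:ℝ) ^ σ :=
    fun k _ => Real.rpow_nonneg (by positivity) σ
  rcases eq_or_lt_of_le hjn with rfl | hjlt
  · have he : (Finset.Icc 1 j).erase j = Finset.Icc 1 (j - 1) := by
      ext k; simp only [Finset.mem_erase, Finset.mem_Icc]; omega
    rw [he]; exact hB
  rcases le_or_gt 0 σ with hσ | hσ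
  · have hjnσ : (j:ℝ) ^ σ ≤ (n:ℝ) ^ σ :=
      Real.rpow_le_rpow (by positivity) (by exact_mod_cast hjn) hσ
    have hmem : n ∈ (Finset.Icc 1 n).erase j := by
      simp only [Finset.mem_erase, Finset.mem_Icc]; omega
    exact le_trans hjnσ (Finset.single_le_sum hnonneg hmem)
  · rcases eq_or_lt_of_le hj1 with hj1' | hj2
    · subst hj1'
      have he : (Finset.Icc 1 n).erase 1 = Finset.Icc 2 n := by
        ext k; simp only [Finset.mem_erase, Finset.mem_Icc]; omega
      rw [he]
      simpa using hA
    · have hjle1 : (j:ℝ) ^ σ ≤ 1 :=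
        Real.rpow_le_one_of_one_le_of_nonpos (by exact_mod_cast hj1) (le_of_lt hσ)
      have hmem : 1 ∈ (Finset.Icc 1 n).erase j := by
        simp only [Finset.mem_erase, Finset.mem_Icc]; omega
      have := Finset.single_le_sum hnonneg hmem
      rw [Nat.cast_one, Real.one_rpow] at this
      exact le_trans hjle1 this
end

section
/- The interval [-0.55, 1] is contained in the closure of {Re s : G_4(s) = 0}, where G_4(s) = 1 + 2^s + 3^s + 4^s. -/
open Complex Real Set Metric

private lemma rpow_div_le {b c : ℝ} (hb : 0 ≤ b) (hc : 0 ≤ c) (p q : ℕ) (hq : q ≠ 0)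
    (h : b ^ p ≤ c ^ q) : b ^ ((p : ℝ) / q) ≤ c := by
  have hq' : ((q : ℝ)) ≠ 0 := Nat.cast_ne_zero.2 hq
  have key : (b ^ ((p : ℝ) / q)) ^ q = b ^ p := by
    rw [← Real.rpow_natCast (b ^ ((p : ℝ) / q)) q, ← Real.rpow_mul hb,
      div_mul_cancel₀ _ hq', Real.rpow_natCast]
  exact le_of_pow_le_pow_left₀ hq hc (le_of_le_of_eq (key ▸ h) rfl)

private lemma le_rpow_div {b c : ℝ} (hb : 0 ≤ b) (p q : ℕ) (hq : q ≠ 0)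
    (h : c ^ q ≤ b ^ p) : c ≤ b ^ ((p : ℝ) / q) := by
  have hq' : ((q : ℝ)) ≠ 0 := Nat.cast_ne_zero.2 hq
  have key : (b ^ ((p : ℝ) / q)) ^ q = b ^ p := by
    rw [← Real.rpow_natCast (b ^ ((p : ℝ) / q)) q, ← Real.rpow_mul hb,
      div_mul_cancel₀ _ hq', Real.rpow_natCast]
  exact le_of_pow_le_pow_left₀ hq (Real.rpow_nonneg hb _) (key ▸ h)

private lemma r8 (x : ℝ) : (8:ℝ) ^ x = 2 ^ (3*x) := by
  rw [show (8:ℝ) = 2 ^ (3:ℕ) by norm_num, ← Real.rpow_natCast 2 3,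
    ← Real.rpow_mul (by norm_num : (0:ℝ) ≤ 2)]
  norm_num

private lemma r9 (x : ℝ) : (9:ℝ) ^ x = 3 ^ (2*x) := by
  rw [show (9:ℝ) = 3 ^ (2:ℕ) by norm_num, ← Real.rpow_natCast 3 2,
    ← Real.rpow_mul (by norm_num : (0:ℝ) ≤ 3)]
  norm_num

private lemma cert_ineq {σ : ℝ} (h1 : -(11/20) ≤ σ) (h2 : σ ≤ 1) :
    ((2:ℝ) ^ σ - 1) * ((8:ℝ) ^ σ - 1) ≤ (9:ℝ) ^ σ := by
  have h2pos : (0:ℝ) < 2 := by norm_num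
  have mono2 : ∀ {u v : ℝ}, u ≤ v → (2:ℝ) ^ u ≤ 2 ^ v := fun h =>
    Real.rpow_le_rpow_of_exponent_le (by norm_num) h
  have mono3 : ∀ {u v : ℝ}, u ≤ v → (3:ℝ) ^ u ≤ 3 ^ v := fun h =>
    Real.rpow_le_rpow_of_exponent_le (by norm_num) h
  rcases le_total σ 0 with h0 | h0
  · -- σ ∈ [-11/20, 0]
    have ha1 : (2:ℝ) ^ σ ≤ 1 := Real.rpow_le_one_of_one_le_of_nonpos (by norm_num) h0
    have hb1 : (8:ℝ) ^ σ ≤ 1 := Real.rpow_le_one_of_one_le_of_nonpos (by norm_num) h0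
    have ha : (17/25 : ℝ) ≤ 2 ^ σ := by
      refine le_trans ?_ (mono2 h1)
      rw [show -(11/20 : ℝ) = -(11/20) by ring, Real.rpow_neg h2pos.le]
      rw [show (11/20:ℝ) = ((11:ℕ):ℝ)/((20:ℕ):ℝ) by norm_num]
      have : (2:ℝ) ^ (((11:ℕ):ℝ)/((20:ℕ):ℝ)) ≤ 25/17 :=
        rpow_div_le h2pos.le (by norm_num) 11 20 (by norm_num) (by norm_num)
      have hpos : (0:ℝ) < 2 ^ (((11:ℕ):ℝ)/((20:ℕ):ℝ)) := Real.rpow_pos_of_pos h2pos _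
      calc (17/25:ℝ) = (25/17)⁻¹ := by norm_num
        _ ≤ (2 ^ (((11:ℕ):ℝ)/((20:ℕ):ℝ)))⁻¹ := by
            exact inv_anti₀ hpos this
    have hb : (31/100 : ℝ) ≤ 8 ^ σ := by
      rw [r8]
      have h3 : -(33/20 : ℝ) ≤ 3 * σ := by linarith
      refine le_trans ?_ (mono2 h3)
      rw [Real.rpow_neg h2pos.le, show (33/20:ℝ) = ((33:ℕ):ℝ)/((20:ℕ):ℝ) by norm_num]
      have : (2:ℝ) ^ (((33:ℕ):ℝ)/((20:ℕ):ℝ)) ≤ 100/31 :=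
        rpow_div_le h2pos.le (by norm_num) 33 20 (by norm_num) (by norm_num)
      have hpos : (0:ℝ) < 2 ^ (((33:ℕ):ℝ)/((20:ℕ):ℝ)) := Real.rpow_pos_of_pos h2pos _
      calc (31/100:ℝ) = (100/31)⁻¹ := by norm_num
        _ ≤ _ := inv_anti₀ hpos this
    have hc : (29/100 : ℝ) ≤ 9 ^ σ := by
      rw [r9]
      have h3 : -(11/10 : ℝ) ≤ 2 * σ := by linarith
      refine le_trans ?_ (mono3 h3)
      rw [Real.rpow_neg (by norm_num : (0:ℝ) ≤ 3),
        show (11/10:ℝ) = ((11:ℕ):ℝ)/((10:ℕ):ℝ) by norm_num]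
      have : (3:ℝ) ^ (((11:ℕ):ℝ)/((10:ℕ):ℝ)) ≤ 100/29 :=
        rpow_div_le (by norm_num) (by norm_num) 11 10 (by norm_num) (by norm_num)
      have hpos : (0:ℝ) < (3:ℝ) ^ (((11:ℕ):ℝ)/((10:ℕ):ℝ)) := Real.rpow_pos_of_pos (by norm_num) _
      calc (29/100:ℝ) = (100/29)⁻¹ := by norm_num
        _ ≤ _ := inv_anti₀ hpos this
    nlinarith [mul_le_mul (by linarith : (1:ℝ) - 2 ^ σ ≤ 8/25)
      (by linarith : (1:ℝ) - 8 ^ σ ≤ 69/100) (by linarith) (by norm_num)]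
  · -- σ ∈ [0,1]
    have ha1 : (1:ℝ) ≤ 2 ^ σ := Real.one_le_rpow (by norm_num) h0
    have hb1 : (1:ℝ) ≤ 8 ^ σ := Real.one_le_rpow (by norm_num) h0
    have key : ∀ u v : ℝ, u ≤ σ → σ ≤ v →
        ∀ Av Bv Cu : ℝ, (2:ℝ) ^ v ≤ Av → (8:ℝ) ^ v ≤ Bv → Cu ≤ (9:ℝ) ^ u →
        (Av - 1) * (Bv - 1) ≤ Cu → ((2:ℝ) ^ σ - 1) * ((8:ℝ) ^ σ - 1) ≤ (9:ℝ) ^ σ := by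
      intro u v hu hv Av Bv Cu hA hB hC hfin
      have l1 : (2:ℝ) ^ σ ≤ Av := le_trans (mono2 hv) hA
      have l2 : (8:ℝ) ^ σ ≤ Bv := by
        rw [r8]; rw [r8] at hB
        exact le_trans (mono2 (by linarith)) hB
      have l3 : Cu ≤ (9:ℝ) ^ σ := by
        rw [r9]; rw [r9] at hC
        exact le_trans hC (mono3 (by linarith))
      nlinarith [mul_le_mul (by linarith : (2:ℝ)^σ - 1 ≤ Av - 1)
        (by linarith : (8:ℝ)^σ - 1 ≤ Bv - 1) (by linarith) (by linarith)]
    rcases le_total σ (2/5) with hs | hs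
    · refine key 0 (2/5) h0 hs (33/25) (23/10) 1 ?_ ?_ ?_ (by norm_num)
      · rw [show (2/5:ℝ) = ((2:ℕ):ℝ)/((5:ℕ):ℝ) by norm_num]
        exact rpow_div_le h2pos.le (by norm_num) 2 5 (by norm_num) (by norm_num)
      · rw [r8, show 3*(2/5:ℝ) = ((6:ℕ):ℝ)/((5:ℕ):ℝ) by norm_num]
        exact rpow_div_le h2pos.le (by norm_num) 6 5 (by norm_num) (by norm_num)
      · rw [Real.rpow_zero]
    rcases le_total σ (18/25) with hs2 | hs2
    · refine key (2/5) (18/25) hs hs2 (33/20) (449/100) (12/5) ?_ ?_ ?_ (by norm_num)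
      · rw [show (18/25:ℝ) = ((18:ℕ):ℝ)/((25:ℕ):ℝ) by norm_num]
        exact rpow_div_le h2pos.le (by norm_num) 18 25 (by norm_num) (by norm_num)
      · rw [r8, show 3*(18/25:ℝ) = ((54:ℕ):ℝ)/((25:ℕ):ℝ) by norm_num]
        exact rpow_div_le h2pos.le (by norm_num) 54 25 (by norm_num) (by norm_num)
      · rw [r9, show 2*(2/5:ℝ) = ((4:ℕ):ℝ)/((5:ℕ):ℝ) by norm_num]
        exact le_rpow_div (by norm_num) 4 5 (by norm_num) (by norm_num)
    rcases le_total σ (9/10) with hs3 | hs3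
    · refine key (18/25) (9/10) hs2 hs3 (187/100) (651/100) (485/100) ?_ ?_ ?_ (by norm_num)
      · rw [show (9/10:ℝ) = ((9:ℕ):ℝ)/((10:ℕ):ℝ) by norm_num]
        exact rpow_div_le h2pos.le (by norm_num) 9 10 (by norm_num) (by norm_num)
      · rw [r8, show 3*(9/10:ℝ) = ((27:ℕ):ℝ)/((10:ℕ):ℝ) by norm_num]
        exact rpow_div_le h2pos.le (by norm_num) 27 10 (by norm_num) (by norm_num)
      · rw [r9, show 2*(18/25:ℝ) = ((36:ℕ):ℝ)/((25:ℕ):ℝ) by norm_num]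
        exact le_rpow_div (by norm_num) 36 25 (by norm_num) (by norm_num)
    · refine key (9/10) 1 hs3 h2 2 8 (71/10) ?_ ?_ ?_ (by norm_num)
      · rw [Real.rpow_one]
      · rw [Real.rpow_one]
      · rw [r9, show 2*(9/10:ℝ) = ((9:ℕ):ℝ)/((5:ℕ):ℝ) by norm_num]
        exact le_rpow_div (by norm_num) 9 5 (by norm_num) (by norm_num)


private lemma sq24 (σ : ℝ) : ((2:ℝ)^σ)^2 = (4:ℝ)^σ := by
  rw [← Real.rpow_natCast ((2:ℝ)^σ) 2, ← Real.rpow_mul (by norm_num : (0:ℝ) ≤ 2),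
    show (4:ℝ) = 2 ^ (2:ℕ) by norm_num, ← Real.rpow_natCast 2 2,
    ← Real.rpow_mul (by norm_num : (0:ℝ) ≤ 2)]
  ring_nf

private lemma cube28 (σ : ℝ) : ((2:ℝ)^σ)^3 = (8:ℝ)^σ := by
  rw [← Real.rpow_natCast ((2:ℝ)^σ) 3, ← Real.rpow_mul (by norm_num : (0:ℝ) ≤ 2),
    show (8:ℝ) = 2 ^ (3:ℕ) by norm_num, ← Real.rpow_natCast 2 3,
    ← Real.rpow_mul (by norm_num : (0:ℝ) ≤ 2)]
  ring_nf

private lemma sq39 (σ : ℝ) : ((3:ℝ)^σ)^2 = (9:ℝ)^σ := by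
  rw [← Real.rpow_natCast ((3:ℝ)^σ) 2, ← Real.rpow_mul (by norm_num : (0:ℝ) ≤ 3),
    show (9:ℝ) = 3 ^ (2:ℕ) by norm_num, ← Real.rpow_natCast 3 2,
    ← Real.rpow_mul (by norm_num : (0:ℝ) ≤ 3)]
  ring_nf

private lemma certificate {σ : ℝ} (h1 : -(11/20) ≤ σ) (h2 : σ ≤ 1) :
    ∃ θ φ : ℝ, (1 : ℂ) + ((2:ℝ)^σ : ℝ) * Complex.exp (θ * I)
      + ((3:ℝ)^σ : ℝ) * Complex.exp (φ * I)
      + ((4:ℝ)^σ : ℝ) * Complex.exp ((2*θ) * I) = 0 := by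
  set a : ℝ := (2:ℝ)^σ with ha
  have hapos : 0 < a := Real.rpow_pos_of_pos (by norm_num) _
  set q : ℝ → ℂ := fun θ => 1 + (a:ℂ) * Complex.exp (θ * I)
      + (((4:ℝ)^σ : ℝ) : ℂ) * Complex.exp ((2*θ) * I) with hq
  have hcont : Continuous fun θ : ℝ => ‖q θ‖ := by
    apply continuous_norm.comp
    fun_prop
  -- value at 0
  have hM0 : (3:ℝ)^σ ≤ ‖q 0‖ := by
    have : q 0 = ((1 + a + (4:ℝ)^σ : ℝ) : ℂ) := by
      simp only [hq]
      push_cast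
      simp [Complex.exp_zero]
    rw [this, Complex.norm_real, Real.norm_eq_abs]
    have h4pos : (0:ℝ) < (4:ℝ)^σ := Real.rpow_pos_of_pos (by norm_num) _
    have h3le : (3:ℝ)^σ ≤ 1 + a + (4:ℝ)^σ := by
      rcases le_total σ 0 with h0 | h0
      · have : (3:ℝ)^σ ≤ 1 := Real.rpow_le_one_of_one_le_of_nonpos (by norm_num) h0
        linarith
      · have : (3:ℝ)^σ ≤ (4:ℝ)^σ := Real.rpow_le_rpow (by norm_num) (by norm_num) h0
        linarith
    rw [abs_of_pos (by linarith)]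
    exact h3le
  -- value at 2π/3
  have hexp1 : Complex.exp (((2*π/3 : ℝ) : ℂ) * I) = ⟨-1/2, Real.sqrt 3 / 2⟩ := by
    rw [Complex.exp_mul_I]
    have hc : Real.cos (2*π/3) = -(1/2) := by
      rw [show (2*π/3 : ℝ) = π - π/3 by ring, Real.cos_pi_sub, Real.cos_pi_div_three]
    have hs : Real.sin (2*π/3) = Real.sqrt 3 / 2 := by
      rw [show (2*π/3 : ℝ) = π - π/3 by ring, Real.sin_pi_sub, Real.sin_pi_div_three]
    rw [show ((2*π/3 : ℝ) : ℂ).cos = ((Real.cos (2*π/3) : ℝ) : ℂ) by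
        rw [Complex.ofReal_cos],
      show ((2*π/3 : ℝ) : ℂ).sin = ((Real.sin (2*π/3) : ℝ) : ℂ) by
        rw [Complex.ofReal_sin], hc, hs]
    apply Complex.ext <;> simp <;> norm_num
  have homega2 : (⟨-1/2, Real.sqrt 3 / 2⟩ : ℂ)^2 = ⟨-1/2, -(Real.sqrt 3 / 2)⟩ := by
    have h3 : Real.sqrt 3 ^ 2 = 3 := Real.sq_sqrt (by norm_num)
    rw [sq]
    apply Complex.ext <;> simp [Complex.mul_re, Complex.mul_im] <;> nlinarith
  have hexp2 : Complex.exp ((2 * ((2*π/3 : ℝ) : ℂ)) * I) = ⟨-1/2, -(Real.sqrt 3 / 2)⟩ := by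
    rw [show (2 * ((2*π/3 : ℝ):ℂ)) * I = ((2*π/3 : ℝ):ℂ) * I + ((2*π/3 : ℝ):ℂ) * I by ring,
      Complex.exp_add, ← sq, hexp1, homega2]
  have hM1 : ‖q (2*π/3)‖ ≤ (3:ℝ)^σ := by
    have habs2 : ‖q (2*π/3)‖ ^ 2 = (a - 1) * (a^3 - 1) := by
      rw [Complex.sq_norm]
      have : q (2*π/3) = ⟨1 - a/2 - ((4:ℝ)^σ)/2,
          a * (Real.sqrt 3 / 2) - ((4:ℝ)^σ) * (Real.sqrt 3 / 2)⟩ := by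
        simp only [hq]
        rw [hexp1, hexp2]
        apply Complex.ext <;>
          simp [Complex.add_re, Complex.add_im, Complex.mul_re, Complex.mul_im] <;> ring
      rw [this, Complex.normSq_mk, ← sq24 σ]
      have h3 : Real.sqrt 3 ^ 2 = 3 := Real.sq_sqrt (by norm_num)
      nlinarith [h3]
    have hfin : ‖q (2*π/3)‖ ^ 2 ≤ ((3:ℝ)^σ)^2 := by
      rw [habs2, sq39, cube28]
      exact cert_ineq h1 h2
    exact le_of_pow_le_pow_left₀ (by norm_num) (Real.rpow_pos_of_pos (by norm_num) σ).le hfin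
  -- IVT
  have hIVT := intermediate_value_Icc' (by positivity : (0:ℝ) ≤ 2*π/3)
    (hcont.continuousOn (s := Icc 0 (2*π/3)))
  have hmem : (3:ℝ)^σ ∈ Icc (‖q (2*π/3)‖) (‖q 0‖) := ⟨hM1, hM0⟩
  obtain ⟨θ, hθmem, hθ⟩ := hIVT hmem
  refine ⟨θ, (-(q θ)).arg, ?_⟩
  have habsc : ‖-(q θ)‖ = (3:ℝ)^σ := by rw [norm_neg]; exact hθ
  have hkey : (((3:ℝ)^σ : ℝ) : ℂ) * Complex.exp ((-(q θ)).arg * I) = -(q θ) := by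
    rw [← habsc]
    exact Complex.norm_mul_exp_arg_mul_I _
  rw [hkey]
  simp only [hq]
  push_cast
  ring

private lemma irr_log : Irrational (Real.log 3 / Real.log 2) := by
  intro ⟨r, hr⟩
  have hl2 : (0:ℝ) < Real.log 2 := Real.log_pos (by norm_num)
  have hl3 : (0:ℝ) < Real.log 3 := Real.log_pos (by norm_num)
  have hrpos : (0:ℝ) < (r:ℝ) := by rw [hr]; positivity
  have hrq : (0:ℚ) < r := by exact_mod_cast hrpos
  set p : ℕ := r.num.toNat with hp
  set q : ℕ := r.den with hqdef
  have hq0 : q ≠ 0 := r.den_nz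
  have hcast : ((p:ℕ):ℝ) = (r.num : ℝ) := by
    exact_mod_cast Int.toNat_of_nonneg (Rat.num_pos.2 hrq).le
  have hpr : (r:ℝ) = (p:ℝ) / (q:ℝ) := by rw [Rat.cast_def, ← hcast]
  have hp0 : p ≠ 0 := by
    have := Rat.num_pos.2 hrq
    simp only [hp]
    omega
  have hkey : (q:ℝ) * Real.log 3 = (p:ℝ) * Real.log 2 := by
    have h : Real.log 3 / Real.log 2 = (p:ℝ)/(q:ℝ) := by rw [← hpr, hr]
    have hq' : ((q:ℝ)) ≠ 0 := Nat.cast_ne_zero.2 hq0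
    field_simp at h
    linarith
  have hreal : ((3:ℝ))^q = ((2:ℝ))^p := by
    have h3 : Real.log ((3:ℝ)^q) = Real.log ((2:ℝ)^p) := by
      rw [Real.log_pow, Real.log_pow]; push_cast; linarith
    have e1 : (0:ℝ) < (3:ℝ)^q := by positivity
    have e2 : (0:ℝ) < (2:ℝ)^p := by positivity
    calc ((3:ℝ))^q = Real.exp (Real.log ((3:ℝ)^q)) := (Real.exp_log e1).symm
      _ = Real.exp (Real.log ((2:ℝ)^p)) := by rw [h3]
      _ = (2:ℝ)^p := Real.exp_log e2
  have hnat : (3:ℕ)^q = 2^p := by exact_mod_cast hreal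
  have hdvd : 2 ∣ (3:ℕ)^q := by
    rw [hnat]
    exact dvd_pow_self 2 hp0
  have := Nat.Prime.dvd_of_dvd_pow Nat.prime_two hdvd
  norm_num at this

private lemma dense_comb (ξ : ℝ) (hξ : Irrational ξ) (x ε : ℝ) (hε : 0 < ε) :
    ∃ m n : ℤ, |x - ((m:ℝ) + (n:ℝ) * ξ)| < ε := by
  set S : AddSubgroup ℝ := AddSubgroup.closure {1, ξ} with hS
  rcases S.dense_or_cyclic with hd | ⟨a, ha⟩
  · obtain ⟨y, hyS, hy⟩ := hd.exists_dist_lt x hε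
    obtain ⟨m, n, hmn⟩ := AddSubgroup.mem_closure_pair.1 hyS
    refine ⟨m, n, ?_⟩
    rw [← hmn] at hy
    rw [Real.dist_eq] at hy
    simpa [zsmul_eq_mul] using hy
  · exfalso
    have h1 : (1:ℝ) ∈ S := AddSubgroup.subset_closure (by simp)
    have h2 : ξ ∈ S := AddSubgroup.subset_closure (by simp)
    rw [ha, AddSubgroup.mem_closure_singleton] at h1 h2
    obtain ⟨n, hn⟩ := h1
    obtain ⟨m, hm⟩ := h2
    have hn0 : n ≠ 0 := by rintro rfl; simp at hn
    have ha0 : (n:ℝ) * a = 1 := by simpa [zsmul_eq_mul] using hn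
    have hm' : (m:ℝ) * a = ξ := by simpa [zsmul_eq_mul] using hm
    have hnne : (n:ℝ) ≠ 0 := Int.cast_ne_zero.2 hn0
    have hmul : ξ * (n:ℝ) = (m:ℝ) := by
      calc ξ * (n:ℝ) = ((m:ℝ) * a) * n := by rw [hm']
        _ = (m:ℝ) * ((n:ℝ) * a) := by ring
        _ = (m:ℝ) := by rw [ha0]; ring
    have hξeq : ξ = ((m/n : ℚ) : ℝ) := by
      push_cast
      field_simp
      linarith [hmul]
    exact (Rat.not_irrational (m / n)) (hξeq ▸ hξ)

private lemma kron (θ φ : ℝ) {ε : ℝ} (hε : 0 < ε) :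
    ∃ t : ℝ, Complex.exp (((t * Real.log 2 : ℝ)) * I) = Complex.exp ((θ:ℂ) * I) ∧
      ‖Complex.exp (((t * Real.log 3 : ℝ)) * I) - Complex.exp ((φ:ℂ) * I)‖ < ε := by
  have hl2 : (0:ℝ) < Real.log 2 := Real.log_pos (by norm_num)
  have hpi : (0:ℝ) < π := Real.pi_pos
  set ξ : ℝ := Real.log 3 / Real.log 2 with hξdef
  set x : ℝ := (φ - θ * ξ) / (2 * π) with hxdef
  have hεs : (0:ℝ) < min ε 1 / (8 * π) := by positivity
  obtain ⟨m, n, hmn⟩ := dense_comb ξ irr_log x _ hεs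
  set t : ℝ := (θ + 2 * π * n) / Real.log 2 with htdef
  have ht2 : t * Real.log 2 = θ + 2 * π * n := by
    rw [htdef]
    field_simp
  have ht3 : t * Real.log 3 = θ * ξ + 2 * π * n * ξ := by
    rw [htdef, hξdef]
    ring
  refine ⟨t, ?_, ?_⟩
  · rw [ht2]
    push_cast
    rw [add_mul, Complex.exp_add]
    rw [show ((2:ℂ) * π * n) * I = (n:ℂ) * (2 * π * I) by ring,
      Complex.exp_int_mul_two_pi_mul_I]
    ring
  · set d : ℝ := t * Real.log 3 - φ + 2 * π * m with hddef
    have hdbound : |d| < min ε 1 / 4 := by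
      have : d = 2 * π * (((m:ℝ) + n * ξ) - x) := by
        rw [hddef, ht3, hxdef]
        field_simp
        ring
      rw [this, abs_mul, abs_of_pos (by positivity : (0:ℝ) < 2*π), abs_sub_comm]
      calc 2 * π * |x - ((m:ℝ) + n * ξ)| < 2 * π * (min ε 1 / (8 * π)) := by
            apply mul_lt_mul_of_pos_left hmn (by positivity)
        _ = min ε 1 / 4 := by field_simp; ring
    have hexp3 : Complex.exp (((t * Real.log 3 : ℝ)) * I)
        = Complex.exp ((φ:ℂ) * I) * Complex.exp ((d:ℂ) * I) := by
      rw [← Complex.exp_add]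
      have : ((t * Real.log 3 : ℝ) : ℂ) * I = ((φ:ℂ) * I + (d:ℂ) * I) + (-m : ℤ) * (2 * π * I) := by
        rw [hddef]
        push_cast
        ring
      rw [this, Complex.exp_add, Complex.exp_int_mul_two_pi_mul_I, mul_one, Complex.exp_add]
    rw [hexp3]
    have : Complex.exp ((φ:ℂ) * I) * Complex.exp ((d:ℂ) * I) - Complex.exp ((φ:ℂ) * I)
        = Complex.exp ((φ:ℂ) * I) * (Complex.exp ((d:ℂ) * I) - 1) := by ring
    rw [this, norm_mul, Complex.norm_exp_ofReal_mul_I, one_mul]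
    have habsd : ‖(d:ℂ) * I‖ = |d| := by
      rw [norm_mul, Complex.norm_I, mul_one, Complex.norm_real, Real.norm_eq_abs]
    have hle1 : ‖(d:ℂ) * I‖ ≤ 1 := by
      rw [habsd]
      have : min ε 1 / 4 ≤ 1 := by
        have := min_le_right ε 1
        linarith
      linarith
    calc ‖Complex.exp ((d:ℂ) * I) - 1‖ ≤ 2 * ‖(d:ℂ) * I‖ :=
          Complex.norm_exp_sub_one_le hle1
      _ = 2 * |d| := by rw [habsd]
      _ < 2 * (min ε 1 / 4) := by linarith [hdbound]
      _ ≤ ε := by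
          have := min_le_left ε 1
          linarith

private lemma min_modulus {f : ℂ → ℂ} {r : ℝ} (hr : 0 < r) (hf : Differentiable ℂ f)
    (hlt : ∀ z ∈ sphere (0:ℂ) r, ‖f 0‖ < ‖f z‖) :
    ∃ z ∈ ball (0:ℂ) r, f z = 0 := by
  by_contra hcon
  push_neg at hcon
  have h0ball : (0:ℂ) ∈ ball (0:ℂ) r := mem_ball_self hr
  have hf0 : f 0 ≠ 0 := hcon 0 h0ball
  have hne : ∀ z ∈ closedBall (0:ℂ) r, f z ≠ 0 := by
    intro z hz
    rcases lt_or_eq_of_le (mem_closedBall_zero_iff.1 hz) with h | h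
    · exact hcon z (mem_ball_zero_iff.2 h)
    · have hzs : z ∈ sphere (0:ℂ) r := by simpa [mem_sphere_zero_iff_norm] using h
      intro h0
      have := hlt z hzs
      rw [h0] at this
      simp at this
      exact hf0 (norm_eq_zero.1 (le_antisymm (le_of_lt this) (norm_nonneg _)))
  obtain ⟨z0, hz0s, hz0m⟩ := (isCompact_sphere (0:ℂ) r).exists_isMinOn
    (NormedSpace.sphere_nonempty.2 hr.le) (hf.continuous.norm.continuousOn)
  have hz0pos : 0 < ‖f z0‖ := lt_of_le_of_lt (norm_nonneg _) (hlt z0 hz0s)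
  have hdc : DiffContOnCl ℂ (fun z => (f z)⁻¹) (ball (0:ℂ) r) := by
    constructor
    · exact (hf.differentiableOn).inv (fun z hz => hcon z hz)
    · rw [closure_ball (0:ℂ) hr.ne']
      exact (hf.continuous.continuousOn).inv₀ hne
  have key := Complex.norm_le_of_forall_mem_frontier_norm_le (isBounded_ball (x := (0:ℂ)) (r := r))
    hdc (C := ‖f z0‖⁻¹) ?_ (subset_closure h0ball)
  · have h1 : ‖f z0‖ ≤ ‖f 0‖ := by
      have h2 : ‖(f 0)⁻¹‖ = ‖f 0‖⁻¹ := norm_inv _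
      rw [h2] at key
      have := (inv_le_inv₀ (norm_pos_iff.2 hf0) hz0pos).1 key
      exact this
    linarith [hlt z0 hz0s]
  · intro z hz
    rw [frontier_ball (0:ℂ) hr.ne'] at hz
    rw [norm_inv]
    exact inv_anti₀ hz0pos (hz0m hz)

-- placeholders

private lemma main_approx {σ : ℝ} (h1 : -(11/20) ≤ σ) (h2 : σ ≤ 1) {ε : ℝ} (hε : 0 < ε) :
    ∃ s : ℂ, 1 + (2:ℂ)^s + (3:ℂ)^s + (4:ℂ)^s = 0 ∧ |s.re - σ| < ε := by
  have hl2 : (0:ℝ) < Real.log 2 := Real.log_pos (by norm_num)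
  have hl3 : (0:ℝ) < Real.log 3 := Real.log_pos (by norm_num)
  set L2 := Real.log 2
  set L3 := Real.log 3
  obtain ⟨θ, φ, hcert⟩ := certificate h1 h2
  set A : ℂ := (((2:ℝ)^σ : ℝ) : ℂ) * Complex.exp ((θ:ℂ) * I) with hA
  set B : ℂ := (((3:ℝ)^σ : ℝ) : ℂ) * Complex.exp ((φ:ℂ) * I) with hB
  set f : ℂ → ℂ := fun z => 1 + A * Complex.exp ((L2:ℂ) * z)
    + B * Complex.exp ((L3:ℂ) * z) + A^2 * Complex.exp ((2*L2:ℂ) * z) with hf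
  have hA2 : A^2 = (((4:ℝ)^σ : ℝ) : ℂ) * Complex.exp ((2*(θ:ℂ)) * I) := by
    rw [hA, mul_pow, ← Complex.ofReal_pow, sq24, sq, ← Complex.exp_add]
    ring_nf
  have hf0 : f 0 = 0 := by
    simp only [hf, mul_zero, Complex.exp_zero, mul_one]
    rw [hA2, hB, hA]
    rw [show (2*(θ:ℂ)) * I = (2*θ:ℂ) * I by push_cast; ring]
    convert hcert using 2
  have hdiff : Differentiable ℂ f := by
    apply Differentiable.add
    apply Differentiable.add
    apply Differentiable.add
    · exact differentiable_const _
    · exact (differentiable_const _).mul ((differentiable_id.const_mul _).cexp)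
    · exact (differentiable_const _).mul ((differentiable_id.const_mul _).cexp)
    · exact (differentiable_const _).mul ((differentiable_id.const_mul _).cexp)
  -- norms of the coefficients
  have habsA : ‖A‖ = (2:ℝ)^σ := by
    rw [hA, norm_mul, Complex.norm_real, Real.norm_eq_abs, Complex.norm_exp_ofReal_mul_I, mul_one,
      abs_of_pos (Real.rpow_pos_of_pos (by norm_num) _)]
  have habsB : ‖B‖ = (3:ℝ)^σ := by
    rw [hB, norm_mul, Complex.norm_real, Real.norm_eq_abs, Complex.norm_exp_ofReal_mul_I, mul_one,
      abs_of_pos (Real.rpow_pos_of_pos (by norm_num) _)]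
  have hA2' : (2:ℝ)^σ ≤ 2 := by
    calc (2:ℝ)^σ ≤ (2:ℝ)^(1:ℝ) := Real.rpow_le_rpow_of_exponent_le (by norm_num) h2
      _ = 2 := Real.rpow_one 2
  have hB3 : (3:ℝ)^σ ≤ 3 := by
    calc (3:ℝ)^σ ≤ (3:ℝ)^(1:ℝ) := Real.rpow_le_rpow_of_exponent_le (by norm_num) h2
      _ = 3 := Real.rpow_one 3
  have hfm4 : f (-4) ≠ 0 := by
    intro hzero
    have hsum : A * Complex.exp ((L2:ℂ) * (-4)) + B * Complex.exp ((L3:ℂ) * (-4))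
        + A^2 * Complex.exp ((2*L2:ℂ) * (-4)) = -1 := by
      have := hzero
      simp only [hf] at this
      linear_combination this
    have hnorm := congrArg (fun w : ℂ => ‖w‖) hsum
    simp only [norm_neg, norm_one] at hnorm
    have he2 : ‖Complex.exp ((L2:ℂ) * (-4))‖ = 1/16 := by
      rw [Complex.norm_exp]
      have : ((L2:ℂ) * (-4)).re = (-4) * L2 := by simp; ring
      rw [this, show (-4:ℝ) * L2 = -(4 * L2) by ring, Real.exp_neg]
      rw [show (4:ℝ) * L2 = (4:ℕ) * L2 by norm_num, Real.exp_nat_mul, Real.exp_log (by norm_num)]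
      norm_num
    have he3 : ‖Complex.exp ((L3:ℂ) * (-4))‖ = 1/81 := by
      rw [Complex.norm_exp]
      have : ((L3:ℂ) * (-4)).re = (-4) * L3 := by simp; ring
      rw [this, show (-4:ℝ) * L3 = -(4 * L3) by ring, Real.exp_neg]
      rw [show (4:ℝ) * L3 = (4:ℕ) * L3 by norm_num, Real.exp_nat_mul, Real.exp_log (by norm_num)]
      norm_num
    have he4 : ‖Complex.exp ((2*L2:ℂ) * (-4))‖ = 1/256 := by
      rw [Complex.norm_exp]
      have : ((2*L2:ℂ) * (-4)).re = (-8) * L2 := by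
        simp
        ring
      rw [this, show (-8:ℝ) * L2 = -(8 * L2) by ring, Real.exp_neg]
      rw [show (8:ℝ) * L2 = (8:ℕ) * L2 by norm_num, Real.exp_nat_mul, Real.exp_log (by norm_num)]
      norm_num
    have hb : (1:ℝ) ≤ 2 * (1/16) + 3 * (1/81) + 4 * (1/256) := by
      calc (1:ℝ) = ‖A * Complex.exp ((L2:ℂ) * (-4)) + B * Complex.exp ((L3:ℂ) * (-4))
            + A^2 * Complex.exp ((2*L2:ℂ) * (-4))‖ := hnorm.symm
        _ ≤ ‖A * Complex.exp ((L2:ℂ) * (-4)) + B * Complex.exp ((L3:ℂ) * (-4))‖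
            + ‖A^2 * Complex.exp ((2*L2:ℂ) * (-4))‖ := norm_add_le _ _
        _ ≤ ‖A * Complex.exp ((L2:ℂ) * (-4))‖
            + ‖B * Complex.exp ((L3:ℂ) * (-4))‖
            + ‖A^2 * Complex.exp ((2*L2:ℂ) * (-4))‖ := by
              gcongr
              exact norm_add_le _ _
        _ ≤ 2 * (1/16) + 3 * (1/81) + 4 * (1/256) := by
              have b1 : ‖A * Complex.exp ((L2:ℂ) * (-4))‖ ≤ 2 * (1/16) := by
                rw [norm_mul, habsA, he2]
                gcongr
              have b2 : ‖B * Complex.exp ((L3:ℂ) * (-4))‖ ≤ 3 * (1/81) := by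
                rw [norm_mul, habsB, he3]
                gcongr
              have b3 : ‖A^2 * Complex.exp ((2*L2:ℂ) * (-4))‖ ≤ 4 * (1/256) := by
                rw [norm_mul, norm_pow, habsA, he4]
                have h0 : (0:ℝ) ≤ (2:ℝ)^σ := (Real.rpow_pos_of_pos (by norm_num) σ).le
                nlinarith
              linarith
    norm_num at hb
  -- isolated zero at 0
  rcases (hdiff.analyticAt 0).eventually_eq_zero_or_eventually_ne_zero with hev | hev
  · exfalso
    have hana : AnalyticOnNhd ℂ f univ := by
      rw [← analyticOnNhd_univ_iff_differentiable] at hdiff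
      exact hdiff
    have heq := hana.eqOn_zero_of_preconnected_of_eventuallyEq_zero
      isPreconnected_univ (mem_univ (0:ℂ)) hev
    exact hfm4 (heq (mem_univ (-4:ℂ)))
  · rw [eventually_nhdsWithin_iff, Metric.eventually_nhds_iff] at hev
    obtain ⟨δ, hδpos, hδf⟩ := hev
    set r : ℝ := min (min δ ε) 1 / 2 with hrdef
    have hrpos : 0 < r := by positivity
    have hrδ : r < δ := by
      have h1 : min (min δ ε) 1 ≤ min δ ε := min_le_left _ _
      have h2 : min δ ε ≤ δ := min_le_left _ _
      simp only [hrdef]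
      linarith
    have hrε : r < ε := by
      have h1 : min (min δ ε) 1 ≤ min δ ε := min_le_left _ _
      have h2 : min δ ε ≤ ε := min_le_right _ _
      simp only [hrdef]
      linarith
    have hr1 : r ≤ 1 := by
      have h1 : min (min δ ε) 1 ≤ 1 := min_le_right _ _
      simp only [hrdef]
      linarith
    obtain ⟨z0, hz0s, hz0m⟩ := (isCompact_sphere (0:ℂ) r).exists_isMinOn
      (NormedSpace.sphere_nonempty.2 hrpos.le) (hdiff.continuous.norm.continuousOn)
    set δ0 : ℝ := ‖f z0‖ with hδ0def
    have hδ0pos : 0 < δ0 := by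
      have hz0r : dist z0 0 < δ := by
        rw [mem_sphere_iff_norm, sub_zero] at hz0s
        rw [dist_zero_right, hz0s]
        exact hrδ
      have hz0ne : z0 ≠ 0 := by
        intro h
        rw [mem_sphere_iff_norm, sub_zero, h] at hz0s
        simp at hz0s
        exact hrpos.ne' hz0s.symm
      have := hδf hz0r (by simpa using hz0ne)
      simpa [hδ0def, norm_pos_iff] using this
    -- Kronecker approximation
    obtain ⟨t, ht2, ht3⟩ := kron θ φ (show (0:ℝ) < δ0/19 by positivity)
    set B' : ℂ := (((3:ℝ)^σ : ℝ) : ℂ) * Complex.exp (((t * L3 : ℝ) : ℂ) * I) with hB'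
    set g : ℂ → ℂ := fun z => 1 + A * Complex.exp ((L2:ℂ) * z)
      + B' * Complex.exp ((L3:ℂ) * z) + A^2 * Complex.exp ((2*L2:ℂ) * z) with hg
    have hgdiff : Differentiable ℂ g := by
      apply Differentiable.add
      apply Differentiable.add
      apply Differentiable.add
      · exact differentiable_const _
      · exact (differentiable_const _).mul ((differentiable_id.const_mul _).cexp)
      · exact (differentiable_const _).mul ((differentiable_id.const_mul _).cexp)
      · exact (differentiable_const _).mul ((differentiable_id.const_mul _).cexp)
    have herr : ∀ z : ℂ, ‖z‖ ≤ r → ‖g z - f z‖ ≤ 9 * (δ0/19) := by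
      intro z hz
      have hgf : g z - f z = (B' - B) * Complex.exp ((L3:ℂ) * z) := by
        simp only [hg, hf]
        ring
      rw [hgf, norm_mul]
      have hBB : ‖B' - B‖ ≤ 3 * (δ0/19) := by
        have : B' - B = (((3:ℝ)^σ : ℝ) : ℂ) * (Complex.exp (((t * L3 : ℝ) : ℂ) * I)
            - Complex.exp ((φ:ℂ) * I)) := by
          rw [hB', hB]
          ring
        rw [this, norm_mul, Complex.norm_real, Real.norm_eq_abs,
          abs_of_pos (Real.rpow_pos_of_pos (by norm_num) _)]
        exact mul_le_mul hB3 (le_of_lt ht3) (by positivity) (by norm_num)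
      have hexpz : ‖Complex.exp ((L3:ℂ) * z)‖ ≤ 3 := by
        rw [Complex.norm_exp]
        have hre : ((L3:ℂ) * z).re = L3 * z.re := by simp
        rw [hre]
        have hz1 : z.re ≤ 1 := le_trans (le_trans (Complex.re_le_norm z) hz) hr1
        calc Real.exp (L3 * z.re) ≤ Real.exp (L3 * 1) := by
              apply Real.exp_le_exp.2
              exact mul_le_mul_of_nonneg_left hz1 hl3.le
          _ = 3 := by rw [mul_one, Real.exp_log (by norm_num)]
      calc ‖B' - B‖ * ‖Complex.exp ((L3:ℂ) * z)‖
          ≤ (3 * (δ0/19)) * 3 := by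
            apply mul_le_mul hBB hexpz (by positivity) (by positivity)
        _ = 9 * (δ0/19) := by ring
    have hmin : ∀ z ∈ sphere (0:ℂ) r, ‖g 0‖ < ‖g z‖ := by
      intro z hzs
      have hgz_lower : δ0 - 9 * (δ0/19) ≤ ‖g z‖ := by
        have h1 : ‖z‖ ≤ r := by
          rw [mem_sphere_iff_norm, sub_zero] at hzs
          rw [hzs]
        have h2 := herr z h1
        have h3 : δ0 ≤ ‖f z‖ := hz0m hzs
        have h4 : ‖f z‖ - ‖g z‖ ≤ ‖g z - f z‖ := by
          rw [norm_sub_rev]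
          exact norm_sub_norm_le (f z) (g z)
        linarith
      have hg0 : ‖g 0‖ ≤ 9 * (δ0/19) := by
        have := herr 0 (by simpa using hrpos.le)
        rw [hf0, sub_zero] at this
        exact this
      calc ‖g 0‖ ≤ 9 * (δ0/19) := hg0
        _ < δ0 - 9 * (δ0/19) := by linarith
        _ ≤ ‖g z‖ := hgz_lower
    -- apply minimum modulus
    obtain ⟨z1, hz1ball, hz1⟩ := min_modulus hrpos hgdiff hmin
    refine ⟨(σ:ℂ) + (t:ℂ) * I + z1, ?_, ?_⟩
    · -- G s = g z1 = 0
      set s : ℂ := (σ:ℂ) + (t:ℂ) * I + z1 with hs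
      have hE2 : Complex.exp (((L2:ℝ):ℂ) * s) = A * Complex.exp ((L2:ℂ) * z1) := by
        rw [show ((L2:ℝ):ℂ) * s = ((σ * L2 : ℝ):ℂ) + ((t * L2 : ℝ):ℂ) * I + (L2:ℂ) * z1 by
          rw [hs]; push_cast; ring]
        rw [Complex.exp_add, Complex.exp_add, ht2, hA, ← Complex.ofReal_exp,
          show Real.exp (σ * L2) = (2:ℝ)^σ by
            rw [Real.rpow_def_of_pos (by norm_num : (0:ℝ) < 2), mul_comm]]
      have hexp2s : (2:ℂ) ^ s = A * Complex.exp ((L2:ℂ) * z1) := by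
        rw [show (2:ℂ) = ((2:ℝ):ℂ) by norm_num,
          Complex.cpow_def_of_ne_zero (by norm_num) s,
          ← Complex.ofReal_log (by norm_num : (0:ℝ) ≤ 2)]
        exact hE2
      have hexp3s : (3:ℂ) ^ s = B' * Complex.exp ((L3:ℂ) * z1) := by
        rw [show (3:ℂ) = ((3:ℝ):ℂ) by norm_num,
          Complex.cpow_def_of_ne_zero (by norm_num) s,
          ← Complex.ofReal_log (by norm_num : (0:ℝ) ≤ 3)]
        rw [show ((L3:ℝ):ℂ) * s = ((σ * L3 : ℝ):ℂ) + ((t * L3 : ℝ):ℂ) * I + (L3:ℂ) * z1 by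
          rw [hs]; push_cast; ring]
        rw [Complex.exp_add, Complex.exp_add, hB', ← Complex.ofReal_exp,
          show Real.exp (σ * L3) = (3:ℝ)^σ by
            rw [Real.rpow_def_of_pos (by norm_num : (0:ℝ) < 3), mul_comm]]
      have hexp4s : (4:ℂ) ^ s = A^2 * Complex.exp ((2*L2:ℂ) * z1) := by
        rw [show (4:ℂ) = ((4:ℝ):ℂ) by norm_num,
          Complex.cpow_def_of_ne_zero (by norm_num) s,
          ← Complex.ofReal_log (by norm_num : (0:ℝ) ≤ 4)]
        have hL4 : Real.log 4 = 2 * L2 := by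
          rw [show (4:ℝ) = 2^(2:ℕ) by norm_num, Real.log_pow]
          push_cast
          ring
        rw [hL4]
        rw [show ((2 * L2 : ℝ):ℂ) * s = ((L2:ℝ):ℂ) * s + ((L2:ℝ):ℂ) * s by push_cast; ring]
        rw [Complex.exp_add, hE2]
        rw [show (2 * (L2:ℂ)) * z1 = (L2:ℂ) * z1 + (L2:ℂ) * z1 by ring, Complex.exp_add]
        ring
      rw [hexp2s, hexp3s, hexp4s]
      have hgz1 := hz1
      simp only [hg] at hgz1
      linear_combination hgz1
    · -- real part estimate
      have hre : ((σ:ℂ) + (t:ℂ) * I + z1).re = σ + z1.re := by simp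
      rw [hre, show σ + z1.re - σ = z1.re by ring]
      exact lt_of_le_of_lt (Complex.abs_re_le_norm z1)
        (lt_trans (mem_ball_zero_iff.1 hz1ball) hrε)


theorem stmt_11 :
    Set.Icc (-0.55 : ℝ) 1 ⊆
      closure {x : ℝ | ∃ s : ℂ,
        1 + (2 : ℂ) ^ s + (3 : ℂ) ^ s + (4 : ℂ) ^ s = 0 ∧ s.re = x} := by
  intro x hx
  rw [Metric.mem_closure_iff]
  intro ε hε
  have h1 : -(11/20 : ℝ) ≤ x := by
    have := hx.1
    norm_num at this ⊢
    linarith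
  obtain ⟨s, hs, hd⟩ := main_approx h1 hx.2 hε
  exact ⟨s.re, ⟨s, hs, rfl⟩, by rw [Real.dist_eq, abs_sub_comm]; exact hd⟩
end

section
/- For every σ ∈ [-0.55, 1] there exists a real x₁ such that |1 + 2^σ·e^{i x₁} + 4^σ·e^{2 i x₁}| = 3^σ. -/
set_option maxHeartbeats 800000 in
open Complex in
theorem stmt_12 (σ : ℝ) (hσ : σ ∈ Set.Icc (-0.55 : ℝ) 1) :
    ∃ x₁ : ℝ,
      ‖(1 + ((2 : ℝ) ^ σ : ℝ) * Complex.exp (x₁ * I)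
          + ((4 : ℝ) ^ σ : ℝ) * Complex.exp (2 * x₁ * I) : ℂ)‖ = (3 : ℝ) ^ σ := by
  obtain ⟨hσl, hσr⟩ := hσ
  set t : ℝ := (2:ℝ) ^ σ with ht_def
  set s : ℝ := (3:ℝ) ^ σ with hs_def
  have ht0 : (0:ℝ) < t := Real.rpow_pos_of_pos (by norm_num) σ
  have hs0 : (0:ℝ) < s := Real.rpow_pos_of_pos (by norm_num) σ
  have h4t : ((4:ℝ) ^ σ) = t ^ 2 := by
    rw [show (4:ℝ) = 2 ^ (2:ℕ) by norm_num, ← Real.rpow_natCast (2:ℝ) 2,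
      ← Real.rpow_mul (by norm_num), ht_def, ← Real.rpow_natCast ((2:ℝ)^σ) 2,
      ← Real.rpow_mul (by norm_num)]
    norm_num [mul_comm]
  -- bounds on t
  have ht_le2 : t ≤ 2 := by
    have := Real.rpow_le_rpow_of_exponent_le (by norm_num : (1:ℝ) ≤ 2) hσr
    simpa using this
  have ht_ge : (1:ℝ)/2 ≤ t := by
    have := Real.rpow_le_rpow_of_exponent_le (by norm_num : (1:ℝ) ≤ 2)
      (by linarith : (-1:ℝ) ≤ σ)
    rw [Real.rpow_neg_one] at this
    linarith
  -- the function
  set f : ℝ → ℝ := fun x => ‖(1 + ((2 : ℝ) ^ σ : ℝ) * Complex.exp (x * I)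
          + ((4 : ℝ) ^ σ : ℝ) * Complex.exp (2 * x * I) : ℂ)‖ with hf_def
  have hf_cont : Continuous f := by
    apply continuous_norm.comp
    fun_prop
  have hf_nonneg : ∀ x, 0 ≤ f x := fun x => norm_nonneg _
  have hf2 : ∀ x : ℝ, f x ^ 2 = (1 + t * Real.cos x + t^2 * (2 * Real.cos x ^ 2 - 1))^2
        + (Real.sin x * (t + 2 * t^2 * Real.cos x))^2 := by
    intro x
    simp only [hf_def]
    rw [Complex.sq_norm]
    have e1 : Complex.exp ((x:ℂ) * I) = (Real.cos x : ℂ) + (Real.sin x : ℂ) * I := by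
      rw [Complex.exp_mul_I, Complex.ofReal_cos, Complex.ofReal_sin]
    have e2 : Complex.exp (2 * (x:ℂ) * I) = (Real.cos (2*x) : ℂ) + (Real.sin (2*x) : ℂ) * I := by
      rw [show (2 * (x:ℂ)) = ((2*x : ℝ) : ℂ) by push_cast; ring,
        Complex.exp_mul_I, Complex.ofReal_cos, Complex.ofReal_sin]
    rw [e1, e2, Real.cos_two_mul, Real.sin_two_mul, h4t]
    simp only [Complex.normSq_apply, Complex.add_re, Complex.add_im, Complex.mul_re,
      Complex.mul_im, Complex.ofReal_re, Complex.ofReal_im, Complex.I_re, Complex.I_im,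
      Complex.one_re, Complex.one_im]
    ring
  -- the special point
  set c : ℝ := -(1 + t^2) / (4*t) with hc_def
  have hc1 : -1 ≤ c := by
    rw [hc_def, le_div_iff₀ (by linarith : (0:ℝ) < 4*t)]
    nlinarith [(t - 1/2) * (2 - t)]
  have hc2 : c ≤ 1 := by
    rw [hc_def, div_le_iff₀ (by linarith : (0:ℝ) < 4*t)]
    nlinarith
  set x₀ : ℝ := Real.arccos c with hx0_def
  have hx0_nonneg : 0 ≤ x₀ := Real.arccos_nonneg c
  have hcos : Real.cos x₀ = c := Real.cos_arccos hc1 hc2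
  have hsin2 : Real.sin x₀ ^ 2 = 1 - Real.cos x₀ ^ 2 := by
    nlinarith [Real.sin_sq_add_cos_sq x₀]
  -- value at x₀
  have hfx0 : f x₀ ^ 2 = 3/4 * (t^2 - 1)^2 := by
    rw [hf2 x₀, mul_pow, hsin2, hcos, hc_def]
    field_simp
    ring
  -- key inequality : f x₀ ^ 2 ≤ s ^ 2
  have hkey : 3/4 * (t^2 - 1)^2 ≤ s^2 := by
    rcases le_or_gt 0 σ with hpos | hneg
    · -- σ ≥ 0 : 0 ≤ t² - 1 ≤ s
      have h1 : (1:ℝ) ≤ t^2 := by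
        rw [← h4t]
        calc (1:ℝ) = (4:ℝ)^(0:ℝ) := by norm_num
        _ ≤ (4:ℝ)^σ := Real.rpow_le_rpow_of_exponent_le (by norm_num) hpos
      have h2 : t^2 - 1 ≤ s := by
        have h43 : (4:ℝ)^σ = (4/3:ℝ)^σ * (3:ℝ)^σ := by
          rw [← Real.mul_rpow (by norm_num) (by norm_num)]
          norm_num
        have h43b : (4/3:ℝ)^σ ≤ 4/3 := by
          have := Real.rpow_le_rpow_of_exponent_le (by norm_num : (1:ℝ) ≤ 4/3) hσr
          simpa using this
        have h3b : s ≤ 3 := by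
          have := Real.rpow_le_rpow_of_exponent_le (by norm_num : (1:ℝ) ≤ 3) hσr
          simpa [hs_def] using this
        have : (4:ℝ)^σ ≤ 4/3 * s := by
          rw [h43, ← hs_def]
          exact mul_le_mul_of_nonneg_right h43b hs0.le
        rw [← h4t]
        linarith
      nlinarith
    · -- σ < 0
      have hτ : 0 < -σ := by linarith
      set a : ℝ := (3:ℝ) ^ (-σ) with ha_def
      set b : ℝ := ((3:ℝ)/4) ^ (-σ) with hb_def
      have ha1 : 1 ≤ a := by
        calc (1:ℝ) = (3:ℝ)^(0:ℝ) := by norm_num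
        _ ≤ (3:ℝ)^(-σ) := Real.rpow_le_rpow_of_exponent_le (by norm_num) (by linarith)
      have hb1 : b ≤ 1 := by
        calc b ≤ ((3:ℝ)/4)^(0:ℝ) :=
          Real.rpow_le_rpow_of_exponent_ge (by norm_num) (by norm_num) (by linarith)
        _ = 1 := by norm_num
      have hb0 : 0 < b := Real.rpow_pos_of_pos (by norm_num) _
      -- a ≤ 1.84
      have haU : a ≤ 1.84 := by
        have hstep : (3:ℝ)^(-σ) ≤ (3:ℝ)^(0.55:ℝ) :=
          Real.rpow_le_rpow_of_exponent_le (by norm_num) (by linarith)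
        have h20 : ((3:ℝ)^(0.55:ℝ)) ^ (20:ℕ) = 3 ^ (11:ℕ) := by
          rw [← Real.rpow_natCast ((3:ℝ)^(0.55:ℝ)) 20, ← Real.rpow_mul (by norm_num)]
          norm_num
        have : (3:ℝ)^(0.55:ℝ) ≤ 1.84 := by
          apply le_of_pow_le_pow_left₀ (n := 20) (by norm_num) (by norm_num)
          rw [h20]; norm_num
        linarith
      -- 0.85 ≤ b
      have hbL : (0.85:ℝ) ≤ b := by
        have hstep : ((3:ℝ)/4)^(0.55:ℝ) ≤ ((3:ℝ)/4)^(-σ) :=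
          Real.rpow_le_rpow_of_exponent_ge (by norm_num) (by norm_num) (by linarith)
        have h20 : (((3:ℝ)/4)^(0.55:ℝ)) ^ (20:ℕ) = ((3:ℝ)/4) ^ (11:ℕ) := by
          rw [← Real.rpow_natCast (((3:ℝ)/4)^(0.55:ℝ)) 20, ← Real.rpow_mul (by norm_num)]
          norm_num
        have : (0.85:ℝ) ≤ ((3:ℝ)/4)^(0.55:ℝ) := by
          apply le_of_pow_le_pow_left₀ (n := 20) (by norm_num)
            (Real.rpow_nonneg (by norm_num) _)
          rw [h20]; norm_num
        linarith
      -- relations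
      have hpa : s * a = 1 := by
        rw [hs_def, ha_def, ← Real.rpow_add (by norm_num)]
        norm_num
      have hqb : a * ((4:ℝ)^σ) = b := by
        rw [ha_def, hb_def, Real.div_rpow (by norm_num) (by norm_num),
          Real.rpow_neg (by norm_num : (0:ℝ) ≤ 4)]
        field_simp
      have hq1 : t^2 ≤ 1 := by
        rw [← h4t]
        calc (4:ℝ)^σ ≤ (4:ℝ)^(0:ℝ) :=
          Real.rpow_le_rpow_of_exponent_le (by norm_num) (by linarith)
        _ = 1 := by norm_num
      have hq0 : 0 < t^2 := by positivity
      have h1q : 1 - t^2 = (a - b) * s := by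
        rw [← h4t]
        have : (4:ℝ)^σ = b * s := by
          rw [← hqb]
          nlinarith [hpa]
        rw [this]
        nlinarith [hpa]
      have hab : a - b ≤ 0.99 := by linarith
      have hab0 : 0 ≤ a - b := by linarith
      have hab2 : (a - b)^2 ≤ (0.99:ℝ)^2 := by nlinarith
      calc 3/4 * (t^2 - 1)^2 = (3/4 * (a-b)^2) * s^2 := by rw [show (t^2 - 1)^2 = (1 - t^2)^2 by ring, h1q]; ring
        _ ≤ (3/4 * (0.99:ℝ)^2) * s^2 := by nlinarith [sq_nonneg s]
        _ ≤ s^2 := by nlinarith [sq_nonneg s]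
  have h_lo : f x₀ ≤ s := by
    apply le_of_pow_le_pow_left₀ (n := 2) (by norm_num) hs0.le
    rw [hfx0]; exact hkey
  -- value at 0 and upper bound
  have h_hi : s ≤ f 0 := by
    apply le_of_pow_le_pow_left₀ (n := 2) (by norm_num) (hf_nonneg 0)
    rw [hf2 0]
    simp only [Real.cos_zero, Real.sin_zero]
    have hsle : s ≤ 1 + t + t^2 := by
      rcases le_or_gt 0 σ with hpos | hneg
      · have h3b : s ≤ 3 := by
          have := Real.rpow_le_rpow_of_exponent_le (by norm_num : (1:ℝ) ≤ 3) hσr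
          simpa [hs_def] using this
        have h1t : 1 ≤ t := by
          calc (1:ℝ) = (2:ℝ)^(0:ℝ) := by norm_num
          _ ≤ t := Real.rpow_le_rpow_of_exponent_le (by norm_num) hpos
        nlinarith
      · have h3b : s ≤ 1 := by
          calc s ≤ (3:ℝ)^(0:ℝ) :=
            Real.rpow_le_rpow_of_exponent_le (by norm_num) (by linarith)
          _ = 1 := by norm_num
        nlinarith
    nlinarith
  -- IVT
  have hsub := intermediate_value_Icc' hx0_nonneg (hf_cont.continuousOn)
  have hmem : s ∈ Set.Icc (f x₀) (f 0) := ⟨h_lo, h_hi⟩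
  obtain ⟨x₁, _, hx₁⟩ := hsub hmem
  exact ⟨x₁, hx₁⟩
end

section
/- For every real σ ∈ [-0.55, 1] there exist real numbers x₁, x₂ such that 1 + 2^σ·e^{i x₁} + 3^σ·e^{i x₂} + 4^σ·e^{2 i x₁} = 0. -/
/-- numeric bound helper: a ≤ b ^ (-0.55) via 20th powers -/
lemma rpow_lower_aux (b a : ℝ) (hb : 0 < b) (ha : 0 ≤ a)
    (h : a ^ (20:ℕ) ≤ b ^ (-11 : ℝ)) : a ≤ b ^ (-0.55 : ℝ) := by
  apply le_of_pow_le_pow_left₀ (n := 20) (by norm_num) (Real.rpow_nonneg hb.le _)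
  have h2 : (b ^ (-0.55:ℝ)) ^ (20:ℕ) = b ^ (-11:ℝ) := by
    rw [← Real.rpow_natCast (b ^ (-0.55:ℝ)) 20, ← Real.rpow_mul hb.le]
    norm_num
  rw [h2]; exact h

open Complex in
theorem stmt_13 (σ : ℝ) (hσ : σ ∈ Set.Icc (-0.55 : ℝ) 1) :
    ∃ x₁ x₂ : ℝ,
      1 + ((2 : ℝ) ^ σ : ℝ) * Complex.exp (x₁ * I)
        + ((3 : ℝ) ^ σ : ℝ) * Complex.exp (x₂ * I)
        + ((4 : ℝ) ^ σ : ℝ) * Complex.exp (2 * x₁ * I) = 0 := by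
  obtain ⟨hσl, hσr⟩ := hσ
  set u : ℝ := (2:ℝ) ^ σ with hu
  set v : ℝ := (3:ℝ) ^ σ with hv
  have hu0 : 0 < u := Real.rpow_pos_of_pos (by norm_num) _
  have hv0 : 0 < v := Real.rpow_pos_of_pos (by norm_num) _
  have h4 : ((4:ℝ) ^ σ) = u ^ 2 := by
    rw [hu, ← Real.rpow_natCast ((2:ℝ)^σ) 2, ← Real.rpow_mul (by norm_num), mul_comm,
      Real.rpow_mul (by norm_num), Real.rpow_natCast]
    norm_num
  have h8 : ((8:ℝ) ^ σ) = u ^ 3 := by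
    rw [hu, ← Real.rpow_natCast ((2:ℝ)^σ) 3, ← Real.rpow_mul (by norm_num), mul_comm,
      Real.rpow_mul (by norm_num), Real.rpow_natCast]
    norm_num
  have h9 : ((9:ℝ) ^ σ) = v ^ 2 := by
    rw [hv, ← Real.rpow_natCast ((3:ℝ)^σ) 2, ← Real.rpow_mul (by norm_num), mul_comm,
      Real.rpow_mul (by norm_num), Real.rpow_natCast]
    norm_num
  -- key polynomial inequality : (1-u)(1-u³) ≤ v²
  have key : 1 - u - u^3 + u^4 ≤ v ^ 2 := by
    rcases le_or_gt 0 σ with hs | hs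
    · have h1u : 1 ≤ u := Real.one_le_rpow (by norm_num) hs
      have hu2 : u ≤ 2 := by
        have := Real.rpow_le_rpow_of_exponent_le (x := (2:ℝ)) (by norm_num) hσr
        rwa [Real.rpow_one] at this
      have huv : u ^ 3 ≤ v ^ 2 := by
        rw [← h8, ← h9]
        exact Real.rpow_le_rpow (by norm_num) (by norm_num) hs
      nlinarith [mul_nonneg (pow_nonneg hu0.le 3) (sub_nonneg.2 hu2),
        sub_nonneg.2 h1u, pow_nonneg hu0.le 3]
    · have hu1 : u ≤ 1 := Real.rpow_le_one_of_one_le_of_nonpos (by norm_num) hs.le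
      have hua : (0.68:ℝ) ≤ u := by
        refine le_trans (rpow_lower_aux 2 0.68 (by norm_num) (by norm_num) ?_)
          (Real.rpow_le_rpow_of_exponent_le (by norm_num) hσl)
        rw [show (-11:ℝ) = ((-11:ℤ):ℝ) by norm_num, Real.rpow_intCast]
        norm_num
      have hub : (0.3:ℝ) ≤ u ^ 3 := by
        rw [← h8]
        refine le_trans (rpow_lower_aux 8 0.3 (by norm_num) (by norm_num) ?_)
          (Real.rpow_le_rpow_of_exponent_le (by norm_num) hσl)
        rw [show (-11:ℝ) = ((-11:ℤ):ℝ) by norm_num, Real.rpow_intCast]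
        norm_num
      have hvb : (0.29:ℝ) ≤ v ^ 2 := by
        rw [← h9]
        refine le_trans (rpow_lower_aux 9 0.29 (by norm_num) (by norm_num) ?_)
          (Real.rpow_le_rpow_of_exponent_le (by norm_num) hσl)
        rw [show (-11:ℝ) = ((-11:ℤ):ℝ) by norm_num, Real.rpow_intCast]
        norm_num
      have hu31 : u ^ 3 ≤ 1 := by nlinarith
      have hprod : (1 - u) * (1 - u^3) ≤ 0.32 * 0.7 := by
        apply mul_le_mul (by linarith) (by linarith) (by linarith) (by norm_num)
      nlinarith [hprod]
  -- the intermediate value argument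
  set f : ℝ → ℝ := fun x => norm
    (1 + ((2 : ℝ) ^ σ : ℝ) * Complex.exp (x * I) + ((4 : ℝ) ^ σ : ℝ) * Complex.exp (2 * x * I))
    with hf
  set c : ℝ := Real.arccos (-(1/2)) with hc
  have hcos : Real.cos c = -(1/2) := Real.cos_arccos (by norm_num) (by norm_num)
  have hsin : Real.sin c = Real.sqrt 3 / 2 := by
    rw [hc, Real.sin_arccos]
    rw [show 1 - (-(1/2):ℝ)^2 = 3/4 by norm_num]
    rw [show (3/4:ℝ) = 3 / 4 by norm_num, Real.sqrt_div (by norm_num : (0:ℝ) ≤ 3),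
      show (4:ℝ) = 2^2 by norm_num, Real.sqrt_sq (by norm_num : (0:ℝ) ≤ 2)]
  have hc0 : 0 ≤ c := Real.arccos_nonneg _
  have hfc : f c ≤ v := by
    have hsq3 : Real.sqrt 3 ^ 2 = 3 := Real.sq_sqrt (by norm_num)
    have e1 : Complex.exp ((c:ℂ) * I) = ((-(1/2) : ℝ) : ℂ) + ((Real.sqrt 3 / 2 : ℝ) : ℂ) * I := by
      rw [Complex.exp_mul_I, ← Complex.ofReal_cos, ← Complex.ofReal_sin, hcos, hsin]
    have e2 : Complex.exp (2 * (c:ℂ) * I) = ((-(1/2) : ℝ) : ℂ) + ((-(Real.sqrt 3 / 2) : ℝ) : ℂ) * I := by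
      rw [show (2 * (c:ℂ)) = ((2*c : ℝ) : ℂ) by push_cast; ring, Complex.exp_mul_I,
        ← Complex.ofReal_cos, ← Complex.ofReal_sin, Real.cos_two_mul, Real.sin_two_mul,
        hcos, hsin]
      push_cast
      ring
    have hval : (1 : ℂ) + ((2 : ℝ) ^ σ : ℝ) * Complex.exp ((c:ℂ) * I)
        + ((4 : ℝ) ^ σ : ℝ) * Complex.exp (2 * (c:ℂ) * I)
        = ((1 - u/2 - u^2/2 : ℝ) : ℂ) + ((Real.sqrt 3 / 2 * (u - u^2) : ℝ) : ℂ) * I := by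
      rw [e1, e2, h4]
      push_cast
      ring
    have : f c = Real.sqrt ((1 - u/2 - u^2/2)^2 + (Real.sqrt 3 / 2 * (u - u^2))^2) := by
      rw [hf]
      simp only
      rw [hval, Complex.norm_add_mul_I]
    rw [this]
    rw [show v = Real.sqrt (v^2) from (Real.sqrt_sq hv0.le).symm]
    apply Real.sqrt_le_sqrt
    nlinarith [key, hsq3]
  have hf0 : v ≤ f 0 := by
    have : f 0 = 1 + u + u^2 := by
      rw [hf]
      simp only
      norm_num [h4]
      rw [show (1:ℂ) + ((2:ℝ)^σ : ℝ) + ((u:ℝ):ℂ)^2 = ((1 + u + u^2 : ℝ) : ℂ) by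
        rw [← hu]; push_cast; ring, Complex.norm_real, Real.norm_eq_abs]
      exact _root_.abs_of_nonneg (by positivity)
    rw [this]
    rcases le_or_gt 0 σ with hs | hs
    · have h34 : v ≤ (4:ℝ)^σ := Real.rpow_le_rpow (by norm_num) (by norm_num) hs
      rw [h4] at h34
      nlinarith
    · have : v ≤ 1 := Real.rpow_le_one_of_one_le_of_nonpos (by norm_num) hs.le
      nlinarith
  have hcont : ContinuousOn f (Set.Icc 0 c) := by
    apply Continuous.continuousOn
    rw [hf]
    exact continuous_norm.comp (by fun_prop)
  have hsub := intermediate_value_Icc' hc0 hcont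
  obtain ⟨x₁, -, hx₁⟩ := hsub ⟨hfc, hf0⟩
  set w : ℂ := 1 + ((2 : ℝ) ^ σ : ℝ) * Complex.exp (x₁ * I)
      + ((4 : ℝ) ^ σ : ℝ) * Complex.exp (2 * x₁ * I) with hw
  have habs : ‖w‖ = v := hx₁
  refine ⟨x₁, Complex.arg (-w), ?_⟩
  have h3 : ((v:ℝ) : ℂ) * Complex.exp ((Complex.arg (-w) : ℝ) * I) = -w := by
    rw [← habs, show ‖w‖ = ‖-w‖ by rw [norm_neg]]
    exact Complex.norm_mul_exp_arg_mul_I (-w)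
  linear_combination h3
end

section
/- Let f be a non-constant entire function and k > 0. Then there exists z₀ ∈ ℂ with |f(z₀)| = k and f'(z₀) ≠ 0. -/
open Set Metric Complex

theorem stmt_17 (f : ℂ → ℂ) (hf : Differentiable ℂ f)
    (hnc : ¬ ∃ c : ℂ, f = fun _ => c) (k : ℝ) (hk : 0 < k) :
    ∃ z₀ : ℂ, ‖f z₀‖ = k ∧ deriv f z₀ ≠ 0 := by
  have hfa : AnalyticOnNhd ℂ f univ := fun z _ => hf.analyticAt z
  have hda : AnalyticOnNhd ℂ (deriv f) univ := hfa.deriv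
  have hd : Differentiable ℂ (deriv f) := fun z => (hda z trivial).differentiableAt
  have hd0 : ¬ ∀ z, deriv f z = 0 := by
    intro h
    exact hnc ⟨f 0, funext fun z => is_const_of_deriv_eq_zero hf h z 0⟩
  set Z : Set ℂ := {z | deriv f z = 0} with hZdef
  have hZclosed : IsClosed Z := isClosed_eq hd.continuous continuous_const
  have hZdisc : DiscreteTopology Z := by
    rw [discreteTopology_subtype_iff]
    intro z hz
    rcases (hda z trivial).eventually_eq_zero_or_eventually_ne_zero with h | h
    · exact absurd (fun w =>
        hda.eqOn_zero_of_preconnected_of_eventuallyEq_zero isPreconnected_univ (mem_univ z) h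
          (mem_univ w)) hd0
    · exact Filter.inf_principal_eq_bot.mpr h
  have hZcnt : Z.Countable := by
    have : Z = ⋃ n : ℕ, Z ∩ closedBall 0 n := by
      ext z
      simp only [mem_iUnion, mem_inter_iff, mem_closedBall, dist_zero_right]
      exact ⟨fun hz => ⟨⌈‖z‖⌉₊, hz, Nat.le_ceil _⟩, fun ⟨n, hz, _⟩ => hz⟩
    rw [this]
    refine countable_iUnion fun n => Set.Finite.countable ?_
    refine IsCompact.finite ?_ (isDiscrete_iff_discreteTopology.mpr (DiscreteTopology.of_subset hZdisc inter_subset_left))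
    exact (isCompact_closedBall (0 : ℂ) n).of_isClosed_subset
      (hZclosed.inter Metric.isClosed_closedBall) inter_subset_right
  have hCcnt : (f '' Z).Countable := hZcnt.image f
  -- there is a point where |f| < k
  have ha : ∃ a, ‖f a‖ < k := by
    by_contra h
    push_neg at h
    have hne : ∀ z, f z ≠ 0 := fun z hz => by
      have := h z; rw [hz] at this; simp at this; linarith
    have hg : Differentiable ℂ fun z => (f z)⁻¹ := fun z => (hf z).inv (hne z)
    have hb : Bornology.IsBounded (range fun z => (f z)⁻¹) := by
      rw [isBounded_iff_forall_norm_le]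
      refine ⟨k⁻¹, ?_⟩
      rintro y ⟨z, rfl⟩
      rw [norm_inv]
      exact inv_anti₀ hk (h z)
    refine hnc ⟨f 0, funext fun z => ?_⟩
    have := hg.apply_eq_apply_of_bounded hb z 0
    exact inv_injective this
  -- there is a point where |f| > k
  have hb : ∃ b, k < ‖f b‖ := by
    by_contra h
    push_neg at h
    have hbd : Bornology.IsBounded (range f) := by
      rw [isBounded_iff_forall_norm_le]
      exact ⟨k, by rintro y ⟨z, rfl⟩; exact h z⟩
    exact hnc ⟨f 0, funext fun z => hf.apply_eq_apply_of_bounded hbd z 0⟩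
  obtain ⟨a, ha⟩ := ha
  obtain ⟨b, hb⟩ := hb
  -- intermediate value: find w₀ in range f with |w₀| = k
  set φ : ℝ → ℝ := fun t => ‖f (a + t • (b - a))‖ with hφdef
  have hφc : Continuous φ :=
    continuous_norm.comp (hf.continuous.comp
      (continuous_const.add (continuous_id.smul continuous_const)))
  have hkmem : k ∈ Icc (φ 0) (φ 1) := by
    constructor
    · simp only [hφdef, zero_smul, add_zero]; exact ha.le
    · simp only [hφdef, one_smul, add_sub_cancel]; exact hb.le
  obtain ⟨t, _, ht⟩ := intermediate_value_Icc zero_le_one hφc.continuousOn hkmem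
  set w₀ : ℂ := f (a + t • (b - a)) with hw₀def
  have habs : ‖w₀‖ = k := ht
  -- range f is open
  have hro : IsOpen (range f) := by
    rcases hfa.is_constant_or_isOpen isPreconnected_univ with ⟨c, hc⟩ | h
    · exact absurd ⟨c, funext fun z => hc z trivial⟩ hnc
    · simpa [image_univ] using h univ subset_rfl isOpen_univ
  obtain ⟨ε, hε, hball⟩ := Metric.isOpen_iff.mp hro w₀ ⟨_, rfl⟩
  -- parametrize the circle of radius k near w₀
  set θ₀ : ℝ := Complex.arg w₀ with hθ₀def
  set γ : ℝ → ℂ := fun θ => (k : ℂ) * Complex.exp (θ * Complex.I) with hγdef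
  have hγ0 : γ θ₀ = w₀ := by
    have := Complex.norm_mul_exp_arg_mul_I w₀
    rw [habs] at this
    exact this
  have hγc : Continuous γ :=
    continuous_const.mul (Complex.continuous_exp.comp
      (Complex.continuous_ofReal.mul continuous_const))
  have hpre : γ ⁻¹' ball w₀ ε ∈ nhds θ₀ :=
    hγc.continuousAt.preimage_mem_nhds (by rw [hγ0]; exact ball_mem_nhds _ hε)
  obtain ⟨δ, hδ, hδsub⟩ := Metric.mem_nhds_iff.mp hpre
  set δ' : ℝ := min δ 1 with hδ'def
  have hδ' : 0 < δ' := lt_min hδ one_pos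
  have hd1 : δ' ≤ δ := min_le_left δ 1
  have hd2 : δ' ≤ 1 := min_le_right δ 1
  have hIoo : Ioo (θ₀ - δ') (θ₀ + δ') ⊆ γ ⁻¹' ball w₀ ε := by
    intro θ hθ
    apply hδsub
    rw [mem_ball, Real.dist_eq, abs_lt]
    exact ⟨by linarith [hθ.1], by linarith [hθ.2]⟩
  -- γ is injective on this interval
  have hinj : InjOn γ (Ioo (θ₀ - δ') (θ₀ + δ')) := by
    intro θ₁ h₁ θ₂ h₂ he
    have hk0 : (k : ℂ) ≠ 0 := by exact_mod_cast hk.ne'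
    have hexp : Complex.exp (θ₁ * Complex.I) = Complex.exp (θ₂ * Complex.I) :=
      mul_left_cancel₀ hk0 he
    obtain ⟨n, hn⟩ := Complex.exp_eq_exp_iff_exists_int.mp hexp
    have hn' : (θ₁ : ℂ) * Complex.I = ((θ₂ + n * (2 * Real.pi) : ℝ) : ℂ) * Complex.I := by
      rw [hn]; push_cast; ring
    have hre : θ₁ = θ₂ + n * (2 * Real.pi) := by
      have := mul_right_cancel₀ Complex.I_ne_zero hn'
      exact_mod_cast this
    have hn0 : n = 0 := by
      have hsmall : |θ₁ - θ₂| < 2 := by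
        rw [abs_lt]
        constructor <;>
          [linarith [h₁.1, h₂.2]; linarith [h₁.2, h₂.1]]
      have heq : |θ₁ - θ₂| = |(n : ℝ)| * (2 * Real.pi) := by
        rw [hre]
        rw [show θ₂ + n * (2 * Real.pi) - θ₂ = n * (2 * Real.pi) by ring]
        rw [abs_mul, abs_of_pos (by positivity : (0:ℝ) < 2 * Real.pi)]
      by_contra hne0
      have h1n : (1 : ℝ) ≤ |(n : ℝ)| := by
        exact_mod_cast Int.one_le_abs (by exact_mod_cast hne0)
      have : 2 * Real.pi ≤ |θ₁ - θ₂| := by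
        rw [heq]
        nlinarith [Real.pi_pos]
      nlinarith [Real.pi_gt_three]
    rw [hre, hn0]; push_cast; ring
  -- the image of the interval is uncountable, hence not contained in f '' Z
  have hlt : θ₀ - δ' < θ₀ + δ' := by linarith
  have hnotc : ¬ (γ '' Ioo (θ₀ - δ') (θ₀ + δ')).Countable := by
    intro hc
    have : (Ioo (θ₀ - δ') (θ₀ + δ')).Countable :=
      Set.countable_of_injective_of_countable_image hinj hc
    have hmk := Cardinal.mk_Ioo_real hlt
    rw [← Cardinal.le_aleph0_iff_set_countable] at this
    rw [hmk] at this
    exact absurd this (not_le.mpr Cardinal.aleph0_lt_continuum)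
  have hex : ∃ w ∈ γ '' Ioo (θ₀ - δ') (θ₀ + δ'), w ∉ f '' Z := by
    by_contra h
    push_neg at h
    exact hnotc (hCcnt.mono h)
  obtain ⟨w, ⟨θ, hθ, rfl⟩, hwZ⟩ := hex
  have hwr : γ θ ∈ range f := hball (hIoo hθ)
  obtain ⟨z₀, hz₀⟩ := hwr
  refine ⟨z₀, ?_, ?_⟩
  · rw [hz₀, hγdef]
    simp only [norm_mul, Complex.norm_real, Real.norm_eq_abs, Complex.norm_exp_ofReal_mul_I, mul_one]
    exact abs_of_pos hk
  · intro hd0'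
    exact hwZ ⟨z₀, hd0', hz₀⟩
end

section
/- Let n > 2 be a prime number. Define f(x) = 1 + 2^x + ... + (n-1)^x, g(x) = ∑_{m=2}^{n-1} (log m / log n)·m^x, and h(x) = n^x for real x, and set b_{n,1} := sup{x : f(x) = h(x)}, b'_{n,1} := sup{x : g(x) = h(x)}. Then b'_{n,1} < b_{n,1}. -/
open Real Filter Set Topology

theorem aux18 (n : ℕ) (hn : 2 < n) (s : Finset ℕ) (hs : s.Nonempty)
    (hmem : ∀ m ∈ s, 1 ≤ m ∧ m < n) (c : ℕ → ℝ) (hc : ∀ m ∈ s, 0 < c m)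
    (hex : ∃ x₀ : ℝ, 1 ≤ ∑ m ∈ s, c m * ((m : ℝ) / n) ^ x₀) :
    ∃ a : ℝ, (∑ m ∈ s, c m * ((m : ℝ) / n) ^ a = 1) ∧
      (∀ x : ℝ, (∑ m ∈ s, c m * ((m : ℝ) / n) ^ x = 1) → x = a) ∧
      StrictAnti (fun x : ℝ => ∑ m ∈ s, c m * ((m : ℝ) / n) ^ x) := by
  have hn0 : (0:ℝ) < n := by positivity
  set Φ : ℝ → ℝ := fun x => ∑ m ∈ s, c m * ((m : ℝ) / n) ^ x with hΦ
  have hb : ∀ m ∈ s, 0 < (m:ℝ)/n ∧ (m:ℝ)/n < 1 := by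
    intro m hm
    obtain ⟨h1, h2⟩ := hmem m hm
    have hm0 : (0:ℝ) < m := by exact_mod_cast h1
    refine ⟨div_pos hm0 hn0, ?_⟩
    rw [div_lt_one hn0]
    exact_mod_cast h2
  have hanti : StrictAnti Φ := by
    intro x y hxy
    exact Finset.sum_lt_sum_of_nonempty hs fun m hm => by
      have h := hb m hm
      exact mul_lt_mul_of_pos_left (Real.rpow_lt_rpow_of_exponent_gt h.1 h.2 hxy) (hc m hm)
  have htop : Tendsto Φ atTop (𝓝 0) := by
    have h0 : Tendsto Φ atTop (𝓝 (∑ m ∈ s, c m * 0)) :=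
      tendsto_finset_sum _ fun m hm =>
        ((tendsto_rpow_atTop_of_base_lt_one _ (by linarith [(hb m hm).1]) (hb m hm).2).const_mul _)
    simpa using h0
  obtain ⟨x₀, hx₀⟩ := hex
  obtain ⟨x₁, hx₁⟩ : ∃ x₁, Φ x₁ < 1 := (htop.eventually (gt_mem_nhds one_pos)).exists
  have hcont : Continuous Φ :=
    continuous_finset_sum _ fun m hm => continuous_const.mul <|
      Continuous.rpow continuous_const continuous_id fun x => Or.inl (ne_of_gt (hb m hm).1)
  have hlt : x₀ < x₁ := hanti.lt_iff_gt.mp (lt_of_lt_of_le hx₁ hx₀)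
  obtain ⟨a, -, ha⟩ := intermediate_value_Icc' hlt.le hcont.continuousOn ⟨hx₁.le, hx₀⟩
  exact ⟨a, ha, fun x hx => hanti.injective (hx.trans ha.symm), hanti⟩

theorem stmt_18 (n : ℕ) (hn : 2 < n) (hp : Nat.Prime n) :
    sSup {x : ℝ | (∑ m ∈ Finset.Icc 2 (n - 1),
        (Real.log m / Real.log n) * (m : ℝ) ^ x) = (n : ℝ) ^ x} <
    sSup {x : ℝ | (∑ m ∈ Finset.Icc 1 (n - 1), (m : ℝ) ^ x) = (n : ℝ) ^ x} := by
  have hn0 : (0:ℝ) < n := by positivity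
  have hn1 : (1:ℝ) < n := by exact_mod_cast (by omega : 1 < n)
  have hlogn : 0 < Real.log n := Real.log_pos hn1
  set s₁ := Finset.Icc 1 (n-1) with hs₁def
  set s₂ := Finset.Icc 2 (n-1) with hs₂def
  have hs₁ : s₁.Nonempty := ⟨1, by simp [hs₁def, Finset.mem_Icc]; omega⟩
  have hs₂ : s₂.Nonempty := ⟨2, by simp [hs₂def, Finset.mem_Icc]; omega⟩
  have hmem₁ : ∀ m ∈ s₁, 1 ≤ m ∧ m < n := fun m hm => by
    simp [hs₁def, Finset.mem_Icc] at hm; omega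
  have hmem₂ : ∀ m ∈ s₂, 1 ≤ m ∧ m < n := fun m hm => by
    simp [hs₂def, Finset.mem_Icc] at hm; omega
  set c₂ : ℕ → ℝ := fun m => Real.log m / Real.log n with hc₂def
  have hc₂ : ∀ m ∈ s₂, 0 < c₂ m := by
    intro m hm
    simp only [hs₂def, Finset.mem_Icc] at hm
    have : (1:ℝ) < m := by exact_mod_cast (by omega : 1 < m)
    exact div_pos (Real.log_pos this) hlogn
  -- existence of points where sums are ≥ 1
  have hex₁ : ∃ x₀ : ℝ, 1 ≤ ∑ m ∈ s₁, (1:ℝ) * ((m : ℝ) / n) ^ x₀ := by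
    refine ⟨0, ?_⟩
    have : ∀ m ∈ s₁, (1:ℝ) * ((m : ℝ) / n) ^ (0:ℝ) = 1 := by
      intro m hm; rw [Real.rpow_zero, mul_one]
    rw [Finset.sum_congr rfl this, Finset.sum_const, nsmul_eq_mul, mul_one]
    have hcard : 1 ≤ s₁.card := Finset.card_pos.mpr hs₁
    exact_mod_cast hcard
  have h2n : (0:ℝ) < 2/n ∧ (2:ℝ)/n < 1 := by
    constructor
    · positivity
    · rw [div_lt_one hn0]; exact_mod_cast hn
  have hc22 : 0 < c₂ 2 := hc₂ 2 (by simp [hs₂def, Finset.mem_Icc]; omega)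
  have hex₂ : ∃ x₀ : ℝ, 1 ≤ ∑ m ∈ s₂, c₂ m * ((m : ℝ) / n) ^ x₀ := by
    have htend : Tendsto (fun x : ℝ => c₂ 2 * ((2:ℝ)/n) ^ x) atBot atTop :=
      (tendsto_rpow_atBot_of_base_lt_one _ h2n.1 h2n.2).const_mul_atTop hc22
    obtain ⟨x₀, hx₀⟩ := (htend.eventually_ge_atTop 1).exists
    refine ⟨x₀, le_trans hx₀ ?_⟩
    have h2mem : (2:ℕ) ∈ s₂ := by simp [hs₂def, Finset.mem_Icc]; omega
    have := Finset.single_le_sum (f := fun m => c₂ m * ((m : ℝ) / n) ^ x₀)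
      (fun m hm => by
        have hb := (div_pos (by exact_mod_cast (hmem₂ m hm).1 : (0:ℝ) < m) hn0)
        positivity) h2mem
    simpa using this
  obtain ⟨a, ha, hua, hanti₁⟩ := aux18 n hn s₁ hs₁ hmem₁ (fun _ => 1) (fun _ _ => one_pos) hex₁
  obtain ⟨a', ha', hua', -⟩ := aux18 n hn s₂ hs₂ hmem₂ c₂ hc₂ hex₂
  have hnx : ∀ x : ℝ, (0:ℝ) < (n:ℝ) ^ x := fun x => Real.rpow_pos_of_pos hn0 x
  have hconv : ∀ (s : Finset ℕ) (c : ℕ → ℝ) (x : ℝ), (∀ m ∈ s, 1 ≤ m ∧ m < n) →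
      ((∑ m ∈ s, c m * (m:ℝ)^x) = (n:ℝ)^x ↔ ∑ m ∈ s, c m * ((m:ℝ)/n)^x = 1) := by
    intro s c x hm
    rw [← div_eq_one_iff_eq (ne_of_gt (hnx x)), Finset.sum_div]
    constructor <;> intro h <;> rw [← h] <;> exact (Finset.sum_congr rfl fun m hms => by
      rw [mul_div_assoc, Real.div_rpow (by positivity) hn0.le]) <;> rfl
  have hS₂ : {x : ℝ | (∑ m ∈ s₂, c₂ m * (m : ℝ) ^ x) = (n : ℝ) ^ x} = {a'} := by
    ext x
    simp only [mem_setOf_eq, mem_singleton_iff]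
    rw [hconv s₂ c₂ x hmem₂]
    exact ⟨hua' x, fun h => h ▸ ha'⟩
  have hS₁ : {x : ℝ | (∑ m ∈ s₁, (m : ℝ) ^ x) = (n : ℝ) ^ x} = {a} := by
    ext x
    simp only [mem_setOf_eq, mem_singleton_iff]
    have : (∑ m ∈ s₁, (m : ℝ) ^ x) = ∑ m ∈ s₁, (1:ℝ) * (m : ℝ) ^ x := by
      simp
    rw [this, hconv s₁ (fun _ => 1) x hmem₁]
    exact ⟨hua x, fun h => h ▸ ha⟩
  rw [hS₁, hS₂, csSup_singleton, csSup_singleton]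
  -- compare: Φ₁ a' > Φ₂ a' = 1 = Φ₁ a
  have hkey : (1:ℝ) < ∑ m ∈ s₁, (1:ℝ) * ((m : ℝ) / n) ^ a' := by
    have hbpos : ∀ m ∈ s₂, (0:ℝ) < ((m : ℝ) / n) ^ a' := fun m hm =>
      Real.rpow_pos_of_pos (div_pos (by exact_mod_cast (hmem₂ m hm).1) hn0) a'
    have step1 : ∑ m ∈ s₂, c₂ m * ((m : ℝ) / n) ^ a' <
        ∑ m ∈ s₂, (1:ℝ) * ((m : ℝ) / n) ^ a' := by
      refine Finset.sum_lt_sum_of_nonempty hs₂ fun m hm => ?_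
      refine mul_lt_mul_of_pos_right ?_ (hbpos m hm)
      rw [hc₂def, div_lt_one hlogn]
      refine Real.log_lt_log (by exact_mod_cast (hmem₂ m hm).1) ?_
      exact_mod_cast (hmem₂ m hm).2
    have step2 : ∑ m ∈ s₂, (1:ℝ) * ((m : ℝ) / n) ^ a' ≤
        ∑ m ∈ s₁, (1:ℝ) * ((m : ℝ) / n) ^ a' := by
      refine Finset.sum_le_sum_of_subset_of_nonneg ?_ fun m hm _ => ?_
      · rw [hs₁def, hs₂def]; exact Finset.Icc_subset_Icc (by omega) le_rfl
      · have hb := div_pos (by exact_mod_cast (hmem₁ m hm).1 : (0:ℝ) < m) hn0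
        positivity
    calc (1:ℝ) = ∑ m ∈ s₂, c₂ m * ((m : ℝ) / n) ^ a' := ha'.symm
      _ < _ := lt_of_lt_of_le step1 step2
  have : (fun x : ℝ => ∑ m ∈ s₁, (1:ℝ) * ((m : ℝ) / n) ^ x) a <
      (fun x : ℝ => ∑ m ∈ s₁, (1:ℝ) * ((m : ℝ) / n) ^ x) a' := by
    show ∑ m ∈ s₁, (1:ℝ) * ((m : ℝ) / n) ^ a < ∑ m ∈ s₁, (1:ℝ) * ((m : ℝ) / n) ^ a'
    rw [ha]
    exact hkey
  exact hanti₁.lt_iff_gt.mp this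
end

section
/- Let n ≥ 2 and let b_{n,1} := sup{x ∈ ℝ : ∑_{m=1}^{n-1} m^x = n^x}. Then for every complex z with Re z > b_{n,1}, G_n(z) := ∑_{m=1}^{n} m^z ≠ 0. -/
open Real Finset Filter

theorem stmt_19 (n : ℕ) (hn : 2 ≤ n) (z : ℂ)
    (hz : sSup {x : ℝ | (∑ m ∈ Finset.Icc 1 (n - 1), (m : ℝ) ^ x) = (n : ℝ) ^ x} < z.re) :
    (∑ m ∈ Finset.Icc 1 n, (m : ℂ) ^ z) ≠ 0 := by
  set x := z.re with hxdef
  have hne : (Finset.Icc 1 (n - 1)).Nonempty := ⟨1, by simp; omega⟩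
  have hnpos : (0 : ℝ) < n := by positivity
  set F : ℝ → ℝ := fun t => ∑ m ∈ Finset.Icc 1 (n - 1), ((m : ℝ) / n) ^ t with hF
  have hmem : ∀ m ∈ Finset.Icc 1 (n - 1), 0 < (m : ℝ) / n ∧ (m : ℝ) / n < 1 := by
    intro m hm
    simp only [Finset.mem_Icc] at hm
    constructor
    · apply div_pos _ hnpos
      exact_mod_cast Nat.lt_of_lt_of_le Nat.zero_lt_one hm.1
    · rw [div_lt_one hnpos]
      exact_mod_cast Nat.lt_of_le_of_lt hm.2 (by omega)
  have hanti : StrictAnti F := by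
    intro a b hab
    refine Finset.sum_lt_sum_of_nonempty hne fun m hm => ?_
    exact Real.rpow_lt_rpow_of_exponent_gt (hmem m hm).1 (hmem m hm).2 hab
  have hcont : Continuous F := by
    apply continuous_finset_sum
    intro m hm
    exact continuous_iff_continuousAt.mpr fun t =>
      Real.continuousAt_const_rpow (ne_of_gt (hmem m hm).1)
  have hF0 : 1 ≤ F 0 := by
    have : F 0 = (Finset.Icc 1 (n - 1)).card := by
      simp [hF, Real.rpow_zero]
    rw [this]
    exact_mod_cast Nat.one_le_iff_ne_zero.mpr (Finset.card_ne_zero_of_mem hne.choose_spec)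
  have htend : Tendsto F atTop (nhds 0) := by
    have h := tendsto_finset_sum (Finset.Icc 1 (n - 1))
      (fun m hm => tendsto_rpow_atTop_of_base_lt_one _
        (by linarith [(hmem m hm).1]) (hmem m hm).2)
    simpa using h
  obtain ⟨x₁, hx₁0, hx₁⟩ : ∃ x₁, 0 ≤ x₁ ∧ F x₁ < 1 := by
    have h := (htend.eventually (eventually_lt_nhds zero_lt_one))
    obtain ⟨x₁, hx₁⟩ := (h.and (eventually_ge_atTop (0 : ℝ))).exists
    exact ⟨x₁, hx₁.2, hx₁.1⟩
  obtain ⟨b, _, hFb⟩ : ∃ b ∈ Set.Icc 0 x₁, F b = 1 := by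
    have hsub := intermediate_value_Icc' hx₁0 hcont.continuousOn
    have h1 : (1 : ℝ) ∈ Set.Icc (F x₁) (F 0) := ⟨le_of_lt hx₁, hF0⟩
    obtain ⟨b, hb, hfb⟩ := hsub h1
    exact ⟨b, hb, hfb⟩
  have key : ∀ t : ℝ, (∑ m ∈ Finset.Icc 1 (n - 1), (m : ℝ) ^ t) = F t * (n : ℝ) ^ t := by
    intro t
    rw [hF, Finset.sum_mul]
    refine Finset.sum_congr rfl fun m hm => ?_
    have hm0 : (0 : ℝ) ≤ m := Nat.cast_nonneg m
    rw [Real.div_rpow hm0 hnpos.le,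
      div_mul_cancel₀ _ (ne_of_gt (Real.rpow_pos_of_pos hnpos _))]
  have hiff : ∀ t : ℝ, (∑ m ∈ Finset.Icc 1 (n - 1), (m : ℝ) ^ t) = (n : ℝ) ^ t ↔ F t = 1 := by
    intro t
    rw [key t]
    have hnt : (0 : ℝ) < (n : ℝ) ^ t := Real.rpow_pos_of_pos hnpos t
    constructor
    · intro h
      exact mul_right_cancel₀ (ne_of_gt hnt) (h.trans (one_mul _).symm)
    · intro h; rw [h, one_mul]
  have hSset : {x : ℝ | (∑ m ∈ Finset.Icc 1 (n - 1), (m : ℝ) ^ x) = (n : ℝ) ^ x} = {b} := by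
    ext t
    simp only [Set.mem_setOf_eq, Set.mem_singleton_iff]
    rw [hiff t]
    constructor
    · intro h
      exact hanti.injective (h.trans hFb.symm)
    · intro h; rw [h, hFb]
  rw [hSset, csSup_singleton] at hz
  have hFx : F x < 1 := by
    calc F x < F b := hanti hz
    _ = 1 := hFb
  have hreal : (∑ m ∈ Finset.Icc 1 (n - 1), (m : ℝ) ^ x) < (n : ℝ) ^ x := by
    rw [key x]
    have hnt : (0 : ℝ) < (n : ℝ) ^ x := Real.rpow_pos_of_pos hnpos x
    nlinarith
  intro h0
  have hsplit : (∑ m ∈ Finset.Icc 1 n, (m : ℂ) ^ z)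
      = (∑ m ∈ Finset.Icc 1 (n - 1), (m : ℂ) ^ z) + (n : ℂ) ^ z := by
    have hn' : n - 1 + 1 = n := by omega
    rw [← hn', Finset.sum_Icc_succ_top (by omega : 1 ≤ n - 1 + 1)]
    simp
  rw [hsplit] at h0
  have heq : (n : ℂ) ^ z = -(∑ m ∈ Finset.Icc 1 (n - 1), (m : ℂ) ^ z) := by
    linear_combination h0
  have habs : (n : ℝ) ^ x ≤ ∑ m ∈ Finset.Icc 1 (n - 1), (m : ℝ) ^ x := by
    have h1 : ‖(n : ℂ) ^ z‖ = (n : ℝ) ^ x := by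
      rw [show ((n : ℂ)) = ((n : ℝ) : ℂ) by push_cast; ring]
      exact Complex.norm_cpow_eq_rpow_re_of_pos hnpos z
    calc (n : ℝ) ^ x = ‖(n : ℂ) ^ z‖ := h1.symm
      _ = ‖∑ m ∈ Finset.Icc 1 (n - 1), (m : ℂ) ^ z‖ := by rw [heq, norm_neg]
      _ ≤ ∑ m ∈ Finset.Icc 1 (n - 1), ‖(m : ℂ) ^ z‖ :=
          norm_sum_le _ _
      _ = ∑ m ∈ Finset.Icc 1 (n - 1), (m : ℝ) ^ x := by
          refine Finset.sum_congr rfl fun m hm => ?_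
          have hmpos : (0 : ℝ) < m := by
            exact_mod_cast Nat.lt_of_lt_of_le Nat.zero_lt_one (Finset.mem_Icc.mp hm).1
          rw [show ((m : ℂ)) = ((m : ℝ) : ℂ) by push_cast; ring]
          exact Complex.norm_cpow_eq_rpow_re_of_pos hmpos z
  linarith
end
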